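/- arXiv:1310.0409 — 6 statements merged into one kernel-verified Lean document; each statement's English description precedes it below -/
import Mathlib

section
/- Let X be a topological space. If player II has a winning strategy in the game G₁^{ω₁}(𝒪,𝒪) on X, then every cover of X by G_𝔠-sets has a subcover of cardinality at most 𝔠 = 2^{ℵ₀} (equivalently, the Lindelöf number of the G_𝔠-modification of X is at most 𝔠). -/
open Cardinal Set

/-- `C` is an open cover of the space `X`: a family of open sets whose union is `X`. -/
def IsOpenCover {X : Type*} [TopologicalSpace X] (C : Set (Set X)) : Prop :=
  (∀ U ∈ C, IsOpen U) ∧ ⋃₀ C = Set.univ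

/-- Player II has a winning strategy in the game `G₁^len(𝒪,𝒪)` on `X`:
there is a strategy `F` assigning to each nonempty sequence `(𝒰_η)_{η ≤ ξ}` (`ξ < len`)
of open covers a member of the last cover `𝒰_ξ`, such that for every `len`-sequence of
open covers played by player I, the sets chosen by `F` cover `X`. -/
def PlayerIIWinsG1OO (X : Type*) [TopologicalSpace X] (len : Ordinal) : Prop :=
  ∃ F : (ξ : Ordinal) → ξ < len → ((η : Ordinal) → η ≤ ξ → Set (Set X)) → Set X,
    (∀ (ξ : Ordinal) (hξ : ξ < len) (h : (η : Ordinal) → η ≤ ξ → Set (Set X)),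
      (∀ η hη, IsOpenCover (h η hη)) → F ξ hξ h ∈ h ξ le_rfl) ∧
    (∀ U : Ordinal → Set (Set X), (∀ ξ < len, IsOpenCover (U ξ)) →
      ⋃₀ {V | ∃ ξ, ∃ hξ : ξ < len, V = F ξ hξ fun η _ => U η} = Set.univ)

/-- `A` is a `G_𝔠`-set: the intersection of at most continuum many open sets. -/
def IsGContinuumSet {X : Type*} [TopologicalSpace X] (A : Set X) : Prop :=
  ∃ 𝒰 : Set (Set X), (∀ U ∈ 𝒰, IsOpen U) ∧ #𝒰 ≤ Cardinal.continuum ∧ A = ⋂₀ 𝒰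

/-! ### Auxiliary machinery for the proof -/

section StmtZeroAux

universe u v

/-- Choose, for a nonempty set `s` of size at most `#α`, a function `α → β` taking values
in `s` and hitting every element of `s`. -/
theorem stmt0_exists_onto {α : Type v} {β : Type u} (s : Set β) (hne : s.Nonempty)
    (h : Cardinal.lift.{v} #s ≤ Cardinal.lift.{u} #α) :
    ∃ g : α → β, (∀ a, g a ∈ s) ∧ ∀ b ∈ s, ∃ a, g a = b := by
  obtain ⟨e⟩ : Nonempty (↥s ↪ α) := Cardinal.lift_mk_le'.mp h
  classical
  refine ⟨fun a => if h : ∃ y : s, e y = a then (h.choose : s).1 else hne.choose, ?_, ?_⟩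
  · intro a
    by_cases h : ∃ y : s, e y = a
    · simp only [dif_pos h]; exact (h.choose).2
    · simp only [dif_neg h]; exact hne.choose_spec
  · intro b hb
    refine ⟨e ⟨b, hb⟩, ?_⟩
    have h : ∃ y : s, e y = e ⟨b, hb⟩ := ⟨⟨b, hb⟩, rfl⟩
    simp only [dif_pos h]
    have := e.injective h.choose_spec
    rw [this]

variable {X : Type u} [TopologicalSpace X]

attribute [local instance] Classical.propDecidable

/-- Extend a history of covers of length `ξ` by appending one more cover at position `ξ`. -/
noncomputable def stmt0_extendH {α : Sort*} (ξ : Ordinal.{v})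
    (hist : (η : Ordinal.{v}) → η < ξ → α) (a : α) : (η : Ordinal.{v}) → η ≤ ξ → α :=
  fun η _ => if h : η < ξ then hist η h else a

/-- The "good point" for a history: a point `x` such that for every open `V ∋ x` there is a
cover which player I can play so that the strategy's response is contained in `V`. -/
noncomputable def stmt0_gpt [Nonempty X]
    (F : (ξ : Ordinal.{v}) → ξ < (Cardinal.aleph 1).ord →
      ((η : Ordinal.{v}) → η ≤ ξ → Set (Set X)) → Set X)
    (ξ : Ordinal.{v}) (hist : (η : Ordinal.{v}) → η < ξ → Set (Set X)) : X :=
  if h : ∃ x : X, ∀ V : Set X, IsOpen V → x ∈ V →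
      ∃ 𝒰, IsOpenCover 𝒰 ∧ ∀ (hξ : ξ < (Cardinal.aleph 1).ord),
        F ξ hξ (stmt0_extendH ξ hist 𝒰) ⊆ V
  then h.choose else Classical.arbitrary X

/-- The cover chosen for player I at stage `ξ`, given the history and the index `c`. -/
noncomputable def stmt0_nextCov [Nonempty X]
    (F : (ξ : Ordinal.{v}) → ξ < (Cardinal.aleph 1).ord →
      ((η : Ordinal.{v}) → η ≤ ξ → Set (Set X)) → Set X)
    (fam : Set X → Set ℕ → Set X) (pick : X → Set X)
    (ξ : Ordinal.{v}) (hist : (η : Ordinal.{v}) → η < ξ → Set (Set X)) (c : Set ℕ) :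
    Set (Set X) :=
  if h : ∃ 𝒰 : Set (Set X), IsOpenCover 𝒰 ∧ ∀ (hξ : ξ < (Cardinal.aleph 1).ord),
      F ξ hξ (stmt0_extendH ξ hist 𝒰) ⊆ fam (pick (stmt0_gpt F ξ hist)) c
  then h.choose else {Set.univ}

/-- The full sequence of covers played along the branch `f`. -/
noncomputable def stmt0_Cov [Nonempty X]
    (F : (ξ : Ordinal.{v}) → ξ < (Cardinal.aleph 1).ord →
      ((η : Ordinal.{v}) → η ≤ ξ → Set (Set X)) → Set X)
    (fam : Set X → Set ℕ → Set X) (pick : X → Set X)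
    (f : Ordinal.{v} → Set ℕ) : Ordinal.{v} → Set (Set X) :=
  Ordinal.lt_wf.fix (fun ξ IH => stmt0_nextCov F fam pick ξ IH (f ξ))

theorem stmt0_Cov_eq [Nonempty X]
    (F : (ξ : Ordinal.{v}) → ξ < (Cardinal.aleph 1).ord →
      ((η : Ordinal.{v}) → η ≤ ξ → Set (Set X)) → Set X)
    (fam : Set X → Set ℕ → Set X) (pick : X → Set X)
    (f : Ordinal.{v} → Set ℕ) (ξ : Ordinal.{v}) :
    stmt0_Cov F fam pick f ξ
      = stmt0_nextCov F fam pick ξ (fun η _ => stmt0_Cov F fam pick f η) (f ξ) :=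
  Ordinal.lt_wf.fix_eq _ ξ

theorem stmt0_nextCov_cover [Nonempty X]
    (F : (ξ : Ordinal.{v}) → ξ < (Cardinal.aleph 1).ord →
      ((η : Ordinal.{v}) → η ≤ ξ → Set (Set X)) → Set X)
    (fam : Set X → Set ℕ → Set X) (pick : X → Set X)
    (ξ : Ordinal.{v}) (hist : (η : Ordinal.{v}) → η < ξ → Set (Set X)) (c : Set ℕ) :
    IsOpenCover (stmt0_nextCov F fam pick ξ hist c) := by
  by_cases h : ∃ 𝒰 : Set (Set X), IsOpenCover 𝒰 ∧ ∀ (hξ : ξ < (Cardinal.aleph 1).ord),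
      F ξ hξ (stmt0_extendH ξ hist 𝒰) ⊆ fam (pick (stmt0_gpt F ξ hist)) c
  · have he : stmt0_nextCov F fam pick ξ hist c = h.choose := by
      unfold stmt0_nextCov; exact dif_pos h
    rw [he]; exact h.choose_spec.1
  · have he : stmt0_nextCov F fam pick ξ hist c = {Set.univ} := by
      unfold stmt0_nextCov; exact dif_neg h
    rw [he]
    refine ⟨?_, ?_⟩
    · intro U hU
      rw [Set.mem_singleton_iff] at hU
      rw [hU]; exact isOpen_univ
    · simp

theorem stmt0_Cov_congr [Nonempty X]
    (F : (ξ : Ordinal.{v}) → ξ < (Cardinal.aleph 1).ord →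
      ((η : Ordinal.{v}) → η ≤ ξ → Set (Set X)) → Set X)
    (fam : Set X → Set ℕ → Set X) (pick : X → Set X)
    (f g : Ordinal.{v} → Set ℕ) (ξ : Ordinal.{v})
    (hfg : ∀ η, η ≤ ξ → f η = g η) :
    stmt0_Cov F fam pick f ξ = stmt0_Cov F fam pick g ξ := by
  revert hfg
  induction ξ using Ordinal.induction with
  | h ξ IH =>
    intro hfg
    rw [stmt0_Cov_eq, stmt0_Cov_eq]
    have h1 : (fun η (_ : η < ξ) => stmt0_Cov F fam pick f η)
        = (fun η (_ : η < ξ) => stmt0_Cov F fam pick g η) := by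
      funext η hη
      exact IH η hη (fun η' hη' => hfg η' (hη'.trans hη.le))
    rw [h1, hfg ξ le_rfl]

/-- The witness in `𝒢` attached to the node `(f restricted below ξ, ξ)`. -/
noncomputable def stmt0_Wit [Nonempty X]
    (F : (ξ : Ordinal.{v}) → ξ < (Cardinal.aleph 1).ord →
      ((η : Ordinal.{v}) → η ≤ ξ → Set (Set X)) → Set X)
    (fam : Set X → Set ℕ → Set X) (pick : X → Set X)
    (f : Ordinal.{v} → Set ℕ) (ξ : Ordinal.{v}) : Set X :=
  pick (stmt0_gpt F ξ (fun η _ => stmt0_Cov F fam pick f η))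

theorem stmt0_Wit_congr [Nonempty X]
    (F : (ξ : Ordinal.{v}) → ξ < (Cardinal.aleph 1).ord →
      ((η : Ordinal.{v}) → η ≤ ξ → Set (Set X)) → Set X)
    (fam : Set X → Set ℕ → Set X) (pick : X → Set X)
    (f g : Ordinal.{v} → Set ℕ) (ξ : Ordinal.{v})
    (hfg : ∀ η, η < ξ → f η = g η) :
    stmt0_Wit F fam pick f ξ = stmt0_Wit F fam pick g ξ := by
  unfold stmt0_Wit
  have h1 : (fun η (_ : η < ξ) => stmt0_Cov F fam pick f η)
      = (fun η (_ : η < ξ) => stmt0_Cov F fam pick g η) := by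
    funext η hη
    exact stmt0_Cov_congr F fam pick f g η (fun η' hη' => hfg η' (hη'.trans_lt hη))
  rw [h1]

/-- The key property of the chosen cover: the strategy's response to it is contained in the
`c`-th basic open set around the witness. -/
theorem stmt0_Cov_spec [Nonempty X]
    (F : (ξ : Ordinal.{v}) → ξ < (Cardinal.aleph 1).ord →
      ((η : Ordinal.{v}) → η ≤ ξ → Set (Set X)) → Set X)
    (hF1 : ∀ (ξ : Ordinal.{v}) (hξ : ξ < (Cardinal.aleph 1).ord)
      (h : (η : Ordinal.{v}) → η ≤ ξ → Set (Set X)),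
      (∀ η hη, IsOpenCover (h η hη)) → F ξ hξ h ∈ h ξ le_rfl)
    (fam : Set X → Set ℕ → Set X) (pick : X → Set X)
    {𝒢 : Set (Set X)}
    (hfam : ∀ A ∈ 𝒢, (∀ c, IsOpen (fam A c)) ∧ ∀ c, A ⊆ fam A c)
    (hpick : ∀ x : X, pick x ∈ 𝒢 ∧ x ∈ pick x)
    (ξ : Ordinal.{v}) (hξ : ξ < (Cardinal.aleph 1).ord)
    (hist : (η : Ordinal.{v}) → η < ξ → Set (Set X))
    (hc : ∀ η hη, IsOpenCover (hist η hη)) (c : Set ℕ) :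
    F ξ hξ (stmt0_extendH ξ hist (stmt0_nextCov F fam pick ξ hist c))
      ⊆ fam (pick (stmt0_gpt F ξ hist)) c := by
  classical
  -- existence of a good point
  have hex : ∃ x : X, ∀ V : Set X, IsOpen V → x ∈ V →
      ∃ 𝒰, IsOpenCover 𝒰 ∧ ∀ (hξ' : ξ < (Cardinal.aleph 1).ord),
        F ξ hξ' (stmt0_extendH ξ hist 𝒰) ⊆ V := by
    by_contra hno
    have hno' : ∀ x : X, ∃ V : Set X, IsOpen V ∧ x ∈ V ∧
        ∀ 𝒰, IsOpenCover 𝒰 → ¬ F ξ hξ (stmt0_extendH ξ hist 𝒰) ⊆ V := by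
      intro x
      by_contra hx
      apply hno
      refine ⟨x, fun V hV hxV => ?_⟩
      by_contra hVno
      exact hx ⟨V, hV, hxV, fun 𝒰 hc𝒰 hsub => hVno ⟨𝒰, hc𝒰, fun _ => hsub⟩⟩
    choose V hVo hxV hVbad using hno'
    have hcovV : IsOpenCover (Set.range V) := by
      refine ⟨?_, ?_⟩
      · rintro U ⟨x, rfl⟩; exact hVo x
      · exact Set.eq_univ_of_forall fun x => ⟨V x, ⟨x, rfl⟩, hxV x⟩
    have hall : ∀ η hη, IsOpenCover (stmt0_extendH ξ hist (Set.range V) η hη) := by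
      intro η hη
      by_cases h : η < ξ
      · have : stmt0_extendH ξ hist (Set.range V) η hη = hist η h := dif_pos h
        rw [this]; exact hc η h
      · have : stmt0_extendH ξ hist (Set.range V) η hη = Set.range V := dif_neg h
        rw [this]; exact hcovV
    have hmem := hF1 ξ hξ _ hall
    rw [show stmt0_extendH ξ hist (Set.range V) ξ le_rfl = Set.range V from
      dif_neg (lt_irrefl ξ)] at hmem
    obtain ⟨x, hxeq⟩ := hmem
    refine hVbad x _ hcovV ?_
    rw [hxeq]
  -- unfold gpt
  have hgpt_eq : stmt0_gpt F ξ hist = hex.choose := by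
    unfold stmt0_gpt; exact dif_pos hex
  have hxgood := hex.choose_spec
  have hA := hpick hex.choose
  have hVx : ∃ 𝒰, IsOpenCover 𝒰 ∧ ∀ (hξ' : ξ < (Cardinal.aleph 1).ord),
      F ξ hξ' (stmt0_extendH ξ hist 𝒰) ⊆ fam (pick hex.choose) c :=
    hxgood _ ((hfam _ hA.1).1 c) ((hfam _ hA.1).2 c hA.2)
  have hVx' : ∃ 𝒰 : Set (Set X), IsOpenCover 𝒰 ∧ ∀ (hξ' : ξ < (Cardinal.aleph 1).ord),
      F ξ hξ' (stmt0_extendH ξ hist 𝒰) ⊆ fam (pick (stmt0_gpt F ξ hist)) c := by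
    rw [hgpt_eq]; exact hVx
  have hnc : stmt0_nextCov F fam pick ξ hist c = hVx'.choose := by
    unfold stmt0_nextCov; exact dif_pos hVx'
  rw [hnc]
  exact hVx'.choose_spec.2 hξ

end StmtZeroAux

/-- If player II has a winning strategy in `G₁^{ω₁}(𝒪,𝒪)` on `X`, then every cover of `X`
by `G_𝔠`-sets has a subcover of cardinality at most `𝔠`. -/
theorem stmt0 {X : Type*} [TopologicalSpace X]
    (hwin : PlayerIIWinsG1OO X (Cardinal.aleph 1).ord)
    (𝒢 : Set (Set X)) (h𝒢 : ∀ A ∈ 𝒢, IsGContinuumSet A) (hcov : ⋃₀ 𝒢 = Set.univ) :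
    ∃ 𝒢' ⊆ 𝒢, #𝒢' ≤ Cardinal.continuum ∧ ⋃₀ 𝒢' = Set.univ := by
  classical
  rcases isEmpty_or_nonempty X with hX | hX
  · refine ⟨∅, Set.empty_subset _, by simp, ?_⟩
    rw [Set.univ_eq_empty_iff.mpr hX]
    simp
  obtain ⟨F, hF1, hF2⟩ := hwin
  -- Step 1: choose basic open families around each member of 𝒢, indexed by `Set ℕ`.
  have hfam0 : ∀ A : Set X, ∃ fA : Set ℕ → Set X, A ∈ 𝒢 →
      (∀ c, IsOpen (fA c)) ∧ (∀ c, A ⊆ fA c) ∧ (∀ z, z ∉ A → ∃ c, z ∉ fA c) := by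
    intro A
    by_cases hA : A ∈ 𝒢
    · obtain ⟨𝒰, hop, hcard, hAeq⟩ := h𝒢 A hA
      have hne : (insert Set.univ 𝒰).Nonempty := ⟨Set.univ, Set.mem_insert _ _⟩
      have hcard' : Cardinal.lift.{0} #(↥(insert Set.univ 𝒰)) ≤
          Cardinal.lift #(Set ℕ) := by
        rw [Cardinal.mk_set_nat, Cardinal.lift_continuum]
        have h1 : #(↥(insert Set.univ 𝒰)) ≤ #↥𝒰 + 1 := Cardinal.mk_insert_le
        have h2 : #↥𝒰 + 1 ≤ Cardinal.continuum + Cardinal.continuum := by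
          refine add_le_add hcard ?_
          exact le_trans (le_of_lt Cardinal.one_lt_aleph0) Cardinal.aleph0_le_continuum
        have h3 : #(↥(insert Set.univ 𝒰)) ≤ Cardinal.continuum := by
          refine le_trans h1 (le_trans h2 ?_)
          rw [Cardinal.continuum_add_self]
        calc Cardinal.lift.{0} #(↥(insert Set.univ 𝒰))
            ≤ Cardinal.lift.{0} Cardinal.continuum := Cardinal.lift_le.mpr h3
          _ = _ := Cardinal.lift_continuum
      obtain ⟨g, hg1, hg2⟩ := stmt0_exists_onto (insert Set.univ 𝒰) hne hcard'
      refine ⟨g, fun _ => ⟨?_, ?_, ?_⟩⟩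
      · intro c
        rcases hg1 c with h | h
        · rw [h]; exact isOpen_univ
        · exact hop _ h
      · intro c
        rcases hg1 c with h | h
        · rw [h]; exact Set.subset_univ A
        · rw [hAeq]; exact Set.sInter_subset_of_mem h
      · intro z hz
        rw [hAeq] at hz
        have : ∃ V ∈ 𝒰, z ∉ V := by
          by_contra hcon
          push_neg at hcon
          exact hz (fun V hV => hcon V hV)
        obtain ⟨W, hW𝒰, hzW⟩ := this
        obtain ⟨c, hc⟩ := hg2 W (Set.mem_insert_of_mem _ hW𝒰)
        exact ⟨c, by rw [hc]; exact hzW⟩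
    · exact ⟨fun _ => Set.univ, fun h => absurd h hA⟩
  choose fam hfam using hfam0
  -- Step 2: choose for each point a member of 𝒢 containing it.
  have hpick0 : ∀ x : X, ∃ A, A ∈ 𝒢 ∧ x ∈ A := by
    intro x
    have : x ∈ ⋃₀ 𝒢 := by rw [hcov]; exact Set.mem_univ x
    obtain ⟨A, hA, hxA⟩ := this
    exact ⟨A, hA, hxA⟩
  choose pick hpickG hpickM using hpick0
  have hpick : ∀ x : X, pick x ∈ 𝒢 ∧ x ∈ pick x := fun x => ⟨hpickG x, hpickM x⟩
  have hfam' : ∀ A ∈ 𝒢, (∀ c, IsOpen (fam A c)) ∧ ∀ c, A ⊆ fam A c :=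
    fun A hA => ⟨(hfam A hA).1, (hfam A hA).2.1⟩
  -- countability of initial segments below ω₁
  have hb : ∀ o : Ordinal, o < (Cardinal.aleph 1).ord → #(↥(Set.Iio o)) ≤ ℵ₀ := by
    intro o ho
    have h := Cardinal.lt_ord.mp ho
    rw [← Cardinal.succ_aleph0, Order.lt_succ_iff] at h
    exact le_trans (le_of_eq (Ordinal.mk_Iio_ordinal _))
      (le_trans (Cardinal.lift_le.mpr h) (le_of_eq Cardinal.lift_aleph0))
  -- choose embeddings of initial segments into ℕ
  have hι : ∀ o : Ordinal, ∃ ι : ↥(Set.Iio o) → ℕ,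
      o < (Cardinal.aleph 1).ord → Function.Injective ι := by
    intro o
    by_cases ho : o < (Cardinal.aleph 1).ord
    · have : Cardinal.lift.{0} #(↥(Set.Iio o)) ≤ Cardinal.lift #(ℕ) := by
        rw [Cardinal.lift_uzero, Cardinal.mk_nat, Cardinal.lift_aleph0]
        exact hb o ho
      obtain ⟨e⟩ := Cardinal.lift_mk_le'.mp this
      exact ⟨e, fun _ => e.injective⟩
    · exact ⟨fun _ => 0, fun h => absurd h ho⟩
  choose emb hemb using hι
  -- The subcover: all witnesses over all countable branches.
  set Φ : (↥(Set.Iio (Cardinal.aleph 1).ord) × (ℕ → Set ℕ)) → Set X :=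
    fun p => stmt0_Wit F fam pick
      (fun η => if h : η < (p.1 : Ordinal) then p.2 (emb (p.1 : Ordinal) ⟨η, h⟩) else ∅)
      (p.1 : Ordinal) with hΦ
  refine ⟨Set.range Φ, ?_, ?_, ?_⟩
  · rintro A ⟨p, rfl⟩
    exact hpickG _
  · -- cardinality bound
    have h1 := Cardinal.mk_range_le_lift (f := Φ)
    have hIio : #(↥(Set.Iio (Cardinal.aleph 1).ord)) ≤ Cardinal.continuum := by
      refine le_trans (le_of_eq (Ordinal.mk_Iio_ordinal _)) ?_
      rw [Cardinal.card_ord]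
      exact le_trans (Cardinal.lift_le.mpr Cardinal.aleph_one_le_continuum)
        (le_of_eq Cardinal.lift_continuum)
    have hNat : #(ℕ → Set ℕ) = Cardinal.continuum := by
      rw [Cardinal.mk_arrow, Cardinal.lift_uzero, Cardinal.lift_uzero,
        Cardinal.mk_set_nat, Cardinal.mk_nat]
      exact Cardinal.continuum_power_aleph0
    have h2 : #(↥(Set.Iio (Cardinal.aleph 1).ord) × (ℕ → Set ℕ)) ≤ Cardinal.continuum := by
      rw [Cardinal.mk_prod]
      refine le_trans (mul_le_mul' ?_ ?_) (le_of_eq Cardinal.continuum_mul_self)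
      · exact le_trans (Cardinal.lift_le.mpr hIio) (le_of_eq Cardinal.lift_continuum)
      · exact le_trans (Cardinal.lift_le.mpr (le_of_eq hNat))
          (le_of_eq Cardinal.lift_continuum)
    refine Cardinal.lift_le.mp (le_trans h1 ?_)
    refine le_trans (Cardinal.lift_le.mpr h2) (le_of_eq ?_)
    rw [Cardinal.lift_continuum, Cardinal.lift_continuum]
  · -- covering
    refine Set.eq_univ_of_forall fun z => ?_
    by_contra hz
    have hz' : ∀ A ∈ Set.range Φ, z ∉ A := fun A hA hzA => hz ⟨A, hA, hzA⟩
    -- every witness along any branch is in the range of Φ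
    have hmemW : ∀ (f : Ordinal → Set ℕ) (ξ : Ordinal) (hξ : ξ < (Cardinal.aleph 1).ord),
        stmt0_Wit F fam pick f ξ ∈ Set.range Φ := by
      intro f ξ hξ
      classical
      refine ⟨⟨⟨ξ, hξ⟩, fun n => if h : ∃ y : ↥(Set.Iio ξ), emb ξ y = n
        then f ((h.choose : ↥(Set.Iio ξ)) : Ordinal) else ∅⟩, ?_⟩
      rw [hΦ]
      refine stmt0_Wit_congr F fam pick _ f ξ (fun η hη => ?_)
      have hex : ∃ y : ↥(Set.Iio ξ), emb ξ y = emb ξ ⟨η, hη⟩ := ⟨⟨η, hη⟩, rfl⟩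
      have hy : hex.choose = ⟨η, hη⟩ := (hemb ξ hξ) hex.choose_spec
      simp only [dif_pos hη, dif_pos hex, hy]
    -- build the defeating branch
    have hzfind : ∀ (ξ : Ordinal) (IH : ∀ η, η < ξ → Set ℕ),
        ξ < (Cardinal.aleph 1).ord →
        ∃ c : Set ℕ, z ∉ fam (stmt0_Wit F fam pick
          (fun η => if h : η < ξ then IH η h else ∅) ξ) c := by
      intro ξ IH hξ
      set A := stmt0_Wit F fam pick (fun η => if h : η < ξ then IH η h else ∅) ξ with hAdef
      have hAG : A ∈ 𝒢 := hpickG _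
      have hAmem : A ∈ Set.range Φ := hmemW _ ξ hξ
      exact (hfam A hAG).2.2 z (hz' A hAmem)
    set f : Ordinal → Set ℕ := Ordinal.lt_wf.fix (fun ξ IH =>
      if hξ : ξ < (Cardinal.aleph 1).ord then (hzfind ξ IH hξ).choose else ∅) with hfdef
    have hfeq : ∀ ξ, f ξ = if hξ : ξ < (Cardinal.aleph 1).ord then
        (hzfind ξ (fun η _ => f η) hξ).choose else ∅ := by
      intro ξ
      rw [hfdef]
      exact Ordinal.lt_wf.fix_eq _ ξ
    have hzf : ∀ (ξ : Ordinal) (hξ : ξ < (Cardinal.aleph 1).ord),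
        z ∉ fam (stmt0_Wit F fam pick f ξ) (f ξ) := by
      intro ξ hξ
      have hspec := (hzfind ξ (fun η _ => f η) hξ).choose_spec
      have hWeq : stmt0_Wit F fam pick (fun η => if h : η < ξ then f η else ∅) ξ
          = stmt0_Wit F fam pick f ξ :=
        stmt0_Wit_congr F fam pick _ f ξ (fun η hη => by simp [dif_pos hη])
      have hfξ : f ξ = (hzfind ξ (fun η _ => f η) hξ).choose := by
        rw [hfeq ξ, dif_pos hξ]
      rw [hfξ, ← hWeq]
      exact hspec
    -- the play is legal
    have hcovs : ∀ ξ, IsOpenCover (stmt0_Cov F fam pick f ξ) := by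
      intro ξ
      rw [stmt0_Cov_eq]
      exact stmt0_nextCov_cover F fam pick ξ _ (f ξ)
    have hwinz := hF2 (stmt0_Cov F fam pick f) (fun ξ _ => hcovs ξ)
    have hzmem : z ∈ ⋃₀ {V | ∃ ξ, ∃ hξ : ξ < (Cardinal.aleph 1).ord,
        V = F ξ hξ fun η _ => stmt0_Cov F fam pick f η} := by
      rw [hwinz]; exact Set.mem_univ z
    obtain ⟨W, ⟨ξ, hξ, hWeq⟩, hzW⟩ := hzmem
    -- the strategy's response is contained in the killed set
    have hsub := stmt0_Cov_spec F hF1 fam pick hfam' hpick ξ hξ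
      (fun η _ => stmt0_Cov F fam pick f η) (fun η hη => hcovs η) (f ξ)
    have hext : stmt0_extendH ξ (fun η (_ : η < ξ) => stmt0_Cov F fam pick f η)
        (stmt0_nextCov F fam pick ξ (fun η _ => stmt0_Cov F fam pick f η) (f ξ))
        = fun η (_ : η ≤ ξ) => stmt0_Cov F fam pick f η := by
      funext η hη
      by_cases h : η < ξ
      · exact dif_pos h
      · have hηξ : η = ξ := le_antisymm hη (not_lt.mp h)
        subst hηξ
        rw [show stmt0_extendH η (fun η' (_ : η' < η) => stmt0_Cov F fam pick f η')
            (stmt0_nextCov F fam pick η (fun η' _ => stmt0_Cov F fam pick f η') (f η)) η hη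
            = stmt0_nextCov F fam pick η (fun η' _ => stmt0_Cov F fam pick f η') (f η)
          from dif_neg h]
        exact (stmt0_Cov_eq F fam pick f η).symm
    rw [hext] at hsub
    have hzfam : z ∈ fam (stmt0_Wit F fam pick f ξ) (f ξ) := by
      have : z ∈ F ξ hξ fun η _ => stmt0_Cov F fam pick f η := by rw [← hWeq]; exact hzW
      exact hsub this
    exact hzf ξ hξ hzfam
end

section
/- Let X be a topological space. If player II has a winning strategy in the (length-ω) Rothberger game G₁(𝒪,𝒪) on X, then the G_δ-modification of X is Lindelöf; that is, every cover of X by G_δ-sets has a countable subcover. -/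
open Cardinal Set

/-- Player II has a winning strategy in the Rothberger game `G₁(𝒪,𝒪)` (of length `ω`)
on `X`: a function `F` assigning to each nonempty finite sequence `(𝒰_i)_{i ≤ n}` of open
covers a member of `𝒰_n`, such that for every `ω`-sequence of open covers played by
player I, the sets chosen by `F` cover `X`. -/
def PlayerIIWinsRothberger (X : Type*) [TopologicalSpace X] : Prop :=
  ∃ F : (n : ℕ) → ((i : ℕ) → i ≤ n → Set (Set X)) → Set X,
    (∀ (n : ℕ) (h : (i : ℕ) → i ≤ n → Set (Set X)),
      (∀ i hi, IsOpenCover (h i hi)) → F n h ∈ h n le_rfl) ∧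
    (∀ U : ℕ → Set (Set X), (∀ n, IsOpenCover (U n)) →
      ⋃₀ {V | ∃ n : ℕ, V = F n fun i _ => U i} = Set.univ)

/-- `A` is a `G_δ`-set: the intersection of countably many open sets. -/
def IsGDeltaSet {X : Type*} [TopologicalSpace X] (A : Set X) : Prop :=
  ∃ 𝒰 : ℕ → Set X, (∀ n, IsOpen (𝒰 n)) ∧ A = ⋂ n, 𝒰 n

namespace RothAux

variable {X : Type*} [TopologicalSpace X]

/-- The response of strategy `F` at inning `n` when the play `g` is modified at inning `n`
to be the cover `C`. -/
noncomputable def respUpd (F : (n : ℕ) → ((i : ℕ) → i ≤ n → Set (Set X)) → Set X)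
    (g : ℕ → Set (Set X)) (n : ℕ) (C : Set (Set X)) : Set X :=
  F n fun i _ => Function.update g n C i

/-- A "Galvin point" for the finite play `g` of length `n`: a point every open neighborhood
of which contains the strategy response to some legal extension of the play. -/
noncomputable def gpt [Nonempty X] (F : (n : ℕ) → ((i : ℕ) → i ≤ n → Set (Set X)) → Set X)
    (g : ℕ → Set (Set X)) (n : ℕ) : X :=
  Classical.epsilon fun x : X => ∀ O : Set X, IsOpen O → x ∈ O →
    ∃ C : Set (Set X), IsOpenCover C ∧ respUpd F g n C ⊆ O

/-- A member of `𝒢` containing the Galvin point. -/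
noncomputable def Apt [Nonempty X] (F : (n : ℕ) → ((i : ℕ) → i ≤ n → Set (Set X)) → Set X)
    (𝒢 : Set (Set X)) (g : ℕ → Set (Set X)) (n : ℕ) : Set X :=
  Classical.epsilon fun A : Set X => A ∈ 𝒢 ∧ gpt F g n ∈ A

/-- The next cover played by player I: an open cover whose strategy response is contained
in the `m`-th open set of the chosen `G_δ`-set. -/
noncomputable def nxt [Nonempty X] (F : (n : ℕ) → ((i : ℕ) → i ≤ n → Set (Set X)) → Set X)
    (𝒢 : Set (Set X)) (U : Set X → ℕ → Set X)
    (g : ℕ → Set (Set X)) (n m : ℕ) : Set (Set X) :=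
  Classical.epsilon fun C : Set (Set X) =>
    IsOpenCover C ∧ respUpd F g n C ⊆ U (Apt F 𝒢 g n) m

/-- The (padded) play of covers along a node of the tree; the head of the list is the
most recent move index. -/
noncomputable def play [Nonempty X] (F : (n : ℕ) → ((i : ℕ) → i ≤ n → Set (Set X)) → Set X)
    (𝒢 : Set (Set X)) (U : Set X → ℕ → Set X) : List ℕ → ℕ → Set (Set X)
  | [] => fun _ => {Set.univ}
  | m :: s => Function.update (play F 𝒢 U s) s.length (nxt F 𝒢 U (play F 𝒢 U s) s.length m)

variable [Nonempty X]
variable (F : (n : ℕ) → ((i : ℕ) → i ≤ n → Set (Set X)) → Set X)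
variable (𝒢 : Set (Set X)) (U : Set X → ℕ → Set X)

theorem gpt_spec
    (hF1 : ∀ (n : ℕ) (h : (i : ℕ) → i ≤ n → Set (Set X)),
      (∀ i hi, IsOpenCover (h i hi)) → F n h ∈ h n le_rfl)
    (g : ℕ → Set (Set X)) (n : ℕ) (hg : ∀ i, IsOpenCover (g i)) :
    ∀ O : Set X, IsOpen O → gpt F g n ∈ O →
      ∃ C : Set (Set X), IsOpenCover C ∧ respUpd F g n C ⊆ O := by
  have hex : ∃ x : X, ∀ O : Set X, IsOpen O → x ∈ O →
      ∃ C : Set (Set X), IsOpenCover C ∧ respUpd F g n C ⊆ O := by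
    by_contra hno
    push_neg at hno
    choose O hO hxO hbad using hno
    have hcovC : IsOpenCover (Set.range O) := by
      constructor
      · rintro V ⟨x, rfl⟩; exact hO x
      · exact Set.eq_univ_of_forall fun x => ⟨O x, ⟨x, rfl⟩, hxO x⟩
    have hleg : ∀ (i : ℕ) (hi : i ≤ n),
        IsOpenCover ((fun i (_ : i ≤ n) => Function.update g n (Set.range O) i) i hi) := by
      intro i hi
      rcases eq_or_ne i n with rfl | h
      · simpa [Function.update_self] using hcovC
      · simpa [Function.update_of_ne h] using hg i
    have hmem := hF1 n (fun i _ => Function.update g n (Set.range O) i) hleg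
    simp only [Function.update_self] at hmem
    obtain ⟨x, hxeq⟩ := hmem
    exact hbad x (Set.range O) hcovC hxeq.ge
  exact Classical.epsilon_spec hex

theorem Apt_spec (hcov : ⋃₀ 𝒢 = Set.univ) (g : ℕ → Set (Set X)) (n : ℕ) :
    Apt F 𝒢 g n ∈ 𝒢 ∧ gpt F g n ∈ Apt F 𝒢 g n := by
  have : gpt F g n ∈ ⋃₀ 𝒢 := hcov ▸ Set.mem_univ _
  obtain ⟨A, hA, hxA⟩ := this
  exact Classical.epsilon_spec (p := fun A : Set X => A ∈ 𝒢 ∧ gpt F g n ∈ A) ⟨A, hA, hxA⟩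

theorem nxt_spec
    (hF1 : ∀ (n : ℕ) (h : (i : ℕ) → i ≤ n → Set (Set X)),
      (∀ i hi, IsOpenCover (h i hi)) → F n h ∈ h n le_rfl)
    (hcov : ⋃₀ 𝒢 = Set.univ)
    (hU : ∀ A ∈ 𝒢, (∀ k, IsOpen (U A k)) ∧ A = ⋂ k, U A k)
    (g : ℕ → Set (Set X)) (n m : ℕ) (hg : ∀ i, IsOpenCover (g i)) :
    IsOpenCover (nxt F 𝒢 U g n m) ∧
      respUpd F g n (nxt F 𝒢 U g n m) ⊆ U (Apt F 𝒢 g n) m := by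
  obtain ⟨hAG, hxA⟩ := Apt_spec F 𝒢 hcov g n
  obtain ⟨hUo, hUe⟩ := hU _ hAG
  have hxU : gpt F g n ∈ U (Apt F 𝒢 g n) m := by
    rw [hUe] at hxA; exact Set.mem_iInter.1 hxA m
  exact Classical.epsilon_spec (gpt_spec F hF1 g n hg _ (hUo m) hxU)

theorem play_cover
    (hF1 : ∀ (n : ℕ) (h : (i : ℕ) → i ≤ n → Set (Set X)),
      (∀ i hi, IsOpenCover (h i hi)) → F n h ∈ h n le_rfl)
    (hcov : ⋃₀ 𝒢 = Set.univ)
    (hU : ∀ A ∈ 𝒢, (∀ k, IsOpen (U A k)) ∧ A = ⋂ k, U A k) :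
    ∀ (s : List ℕ) (i : ℕ), IsOpenCover (play F 𝒢 U s i) := by
  intro s
  induction s with
  | nil =>
    intro i
    constructor
    · intro V hV
      simp only [play, Set.mem_singleton_iff] at hV
      subst hV; exact isOpen_univ
    · simp [play]
  | cons m s ih =>
    intro i
    rcases eq_or_ne i s.length with rfl | h
    · simp only [play, Function.update_self]
      exact (nxt_spec F 𝒢 U hF1 hcov hU (play F 𝒢 U s) s.length m ih).1
    · simp only [play, Function.update_of_ne h]
      exact ih i

end RothAux

open RothAux in
/-- If player II has a winning strategy in the Rothberger game `G₁(𝒪,𝒪)` on `X`, then the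
`G_δ`-modification of `X` is Lindelöf: every cover of `X` by `G_δ`-sets has a countable
subcover. -/
theorem stmt2 {X : Type*} [TopologicalSpace X]
    (hwin : PlayerIIWinsRothberger X)
    (𝒢 : Set (Set X)) (h𝒢 : ∀ A ∈ 𝒢, IsGDeltaSet A) (hcov : ⋃₀ 𝒢 = Set.univ) :
    ∃ 𝒢' ⊆ 𝒢, 𝒢'.Countable ∧ ⋃₀ 𝒢' = Set.univ := by
  rcases isEmpty_or_nonempty X with hE | hNE
  · refine ⟨∅, Set.empty_subset _, Set.countable_empty, ?_⟩
    exact Set.eq_univ_of_forall fun x => isEmptyElim x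
  obtain ⟨F, hF1, hF2⟩ := hwin
  have hUex : ∀ A : Set X, ∃ V : ℕ → Set X,
      A ∈ 𝒢 → (∀ k, IsOpen (V k)) ∧ A = ⋂ k, V k := by
    intro A
    by_cases hA : A ∈ 𝒢
    · obtain ⟨V, hV1, hV2⟩ := h𝒢 A hA
      exact ⟨V, fun _ => ⟨hV1, hV2⟩⟩
    · exact ⟨fun _ => Set.univ, fun h => absurd h hA⟩
  choose U hU using hUex
  have hU' : ∀ A ∈ 𝒢, (∀ k, IsOpen (U A k)) ∧ A = ⋂ k, U A k := fun A hA => hU A hA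
  refine ⟨Set.range (fun s : List ℕ => Apt F 𝒢 (play F 𝒢 U s) s.length), ?_,
    Set.countable_range _, ?_⟩
  · rintro A ⟨s, rfl⟩
    exact (Apt_spec F 𝒢 hcov _ _).1
  apply Set.eq_univ_of_forall
  intro x
  by_contra hx
  have hxs : ∀ s : List ℕ, x ∉ Apt F 𝒢 (play F 𝒢 U s) s.length := by
    intro s hmem
    exact hx ⟨_, ⟨s, rfl⟩, hmem⟩
  have hxm : ∀ s : List ℕ, ∃ m, x ∉ U (Apt F 𝒢 (play F 𝒢 U s) s.length) m := by
    intro s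
    have hAG := (Apt_spec F 𝒢 hcov (play F 𝒢 U s) s.length).1
    have hUe := (hU' _ hAG).2
    by_contra hall
    push_neg at hall
    exact hxs s (hUe ▸ Set.mem_iInter.2 hall)
  choose μ hμ using hxm
  -- the defeating branch through the tree
  let t : ℕ → List ℕ := fun n => Nat.rec (motive := fun _ => List ℕ) [] (fun _ tk => μ tk :: tk) n
  have htS : ∀ n, t (n + 1) = μ (t n) :: t n := fun n => rfl
  have hlen : ∀ n, (t n).length = n := by
    intro n
    induction n with
    | zero => rfl
    | succ k ih => rw [htS, List.length_cons, ih]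
  let W : ℕ → Set (Set X) := fun n => nxt F 𝒢 U (play F 𝒢 U (t n)) n (μ (t n))
  have hplayS : ∀ n, play F 𝒢 U (t (n + 1)) = Function.update (play F 𝒢 U (t n)) n (W n) := by
    intro n
    rw [htS]
    simp only [play, hlen]
    rfl
  have hagree : ∀ n i, i < n → play F 𝒢 U (t n) i = W i := by
    intro n
    induction n with
    | zero => intro i h; exact absurd h (Nat.not_lt_zero i)
    | succ k ih =>
      intro i h
      rw [hplayS k]
      rcases eq_or_ne i k with rfl | hne
      · rw [Function.update_self]
      · rw [Function.update_of_ne hne]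
        exact ih i (by omega)
  have hWcov : ∀ n, IsOpenCover (W n) := fun n =>
    (nxt_spec F 𝒢 U hF1 hcov hU' (play F 𝒢 U (t n)) n (μ (t n))
      (play_cover F 𝒢 U hF1 hcov hU' (t n))).1
  have hxin : x ∈ ⋃₀ {V | ∃ n : ℕ, V = F n fun i _ => W i} :=
    (hF2 W hWcov) ▸ Set.mem_univ x
  obtain ⟨V, ⟨n, rfl⟩, hxV⟩ := hxin
  have hEq : (fun i (_ : i ≤ n) => W i)
      = (fun i (_ : i ≤ n) => Function.update (play F 𝒢 U (t n)) n (W n) i) := by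
    funext i hi
    rcases eq_or_ne i n with rfl | hne
    · rw [Function.update_self]
    · rw [Function.update_of_ne hne, hagree n i (lt_of_le_of_ne hi hne)]
  have hsub := (nxt_spec F 𝒢 U hF1 hcov hU' (play F 𝒢 U (t n)) n (μ (t n))
    (play_cover F 𝒢 U hF1 hcov hU' (t n))).2
  have hxU : x ∈ U (Apt F 𝒢 (play F 𝒢 U (t n)) n) (μ (t n)) := by
    apply hsub
    rw [hEq] at hxV
    exact hxV
  have hnot := hμ (t n)
  rw [hlen n] at hnot
  exact hnot hxU
end

section
/- Let X be a topological space with points G_δ (every singleton is the intersection of countably many open sets). If player II has a winning strategy in the game G₁^{ω₁}(𝒪,𝒪) on X, then |X| ≤ 2^{ℵ₀}. -/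
open Cardinal Set

/-- `X` has points `G_δ`: every singleton is the intersection of countably many open sets. -/
def PointsGDelta (X : Type*) [TopologicalSpace X] : Prop :=
  ∀ x : X, ∃ 𝒰 : ℕ → Set X, (∀ n, IsOpen (𝒰 n)) ∧ (⋂ n, 𝒰 n) = {x}

/-
# Auxiliary development

We prove: if `X` has points `G_δ` and II has a winning strategy `F` in `G₁^{ω₁}(𝒪,𝒪)`,
then `|X| ≤ 𝔠`.

Outline of the mathematical argument:

* (Engine / "trapped point" lemma) For any position (a sequence of covers played by I at the
  innings `< β`), there is a point `x₀` such that for EVERY open `W ∋ x₀` there is an open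
  cover `𝒰` which player I can play next so that II's response `F(...⌢𝒰) ⊆ W`.
  Indeed, otherwise each `x` has a bad neighbourhood `W x`, and `{W x : x ∈ X}` is an open
  cover; II's response to it is a member `W x₁ ⊆ W x₁`, a contradiction.

* Fix `G_δ` witnesses `U t n` (open, with `⋂ n, U t n = {t}`).  For every `f : Ordinal → ℕ`
  define by transfinite recursion a play `playf f` of player I: at inning `β`, letting `t`
  be the trapped point of the current position, player I plays a cover forcing II's response
  inside `U t (f β)`.

* Given `x`, define (recursively) `dodge x : Ordinal → ℕ` picking at each inning some `n`
  with `x ∉ U t n` (possible whenever `x ≠ t`).  If `x` differed from the trapped point at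
  every inning `β < ω₁` of its own play `playf (dodge x)`, then every response of II along
  that play would miss `x`, contradicting that `F` is winning.  Hence every `x` is the
  trapped point at some countable stage `β` of its own play.

* Since the play `playf f` up to stage `β` depends only on `f ↾ β`, the map
  `x ↦ (β_x, (dodge x) ↾ β_x)` is injective into `Σ β : Iio ω₁, (Iio β → ℕ)`,
  a set of size at most `ℵ₁ · ℵ₀^{ℵ₀} = 𝔠`.
-/

namespace Stmt3Aux

set_option linter.unusedSectionVars false

attribute [local instance] Classical.propDecidable

universe u w

variable {X : Type u} [TopologicalSpace X]

variable (F : (ξ : Ordinal.{w}) → ξ < (Cardinal.aleph 1).ord →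
      ((η : Ordinal.{w}) → η ≤ ξ → Set (Set X)) → Set X)

/-- The response of the strategy `F` at inning `β` when the innings `< β` were `pr` and
player I plays `𝒰` at inning `β`. -/
def Resp' (β : Ordinal.{w}) (pr : (γ : Ordinal.{w}) → γ < β → Set (Set X))
    (hβ : β < (Cardinal.aleph 1).ord) (𝒰 : Set (Set X)) : Set X :=
  F β hβ (fun η hη => if h : η = β then 𝒰 else pr η (hη.lt_of_ne h))

/-- `x₀` is a trapped point at position `(β, pr)`: every open neighborhood of `x₀` can be
forced as a superset of II's next response, by a suitable open cover played by I. -/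
def Ppt (β : Ordinal.{w}) (pr : (γ : Ordinal.{w}) → γ < β → Set (Set X)) (x₀ : X) : Prop :=
  ∀ W : Set X, IsOpen W → x₀ ∈ W →
    ∃ 𝒰, IsOpenCover 𝒰 ∧ ∀ hβ, Resp' F β pr hβ 𝒰 ⊆ W

/-- The key lemma: at every position there exists a trapped point. -/
theorem exists_trap
    (hmem : ∀ (ξ : Ordinal.{w}) (hξ : ξ < (Cardinal.aleph 1).ord)
      (h : (η : Ordinal.{w}) → η ≤ ξ → Set (Set X)),
      (∀ η hη, IsOpenCover (h η hη)) → F ξ hξ h ∈ h ξ le_rfl)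
    (β : Ordinal.{w}) (hβ : β < (Cardinal.aleph 1).ord)
    (pr : (γ : Ordinal.{w}) → γ < β → Set (Set X))
    (hpr : ∀ γ hγ, IsOpenCover (pr γ hγ)) :
    ∃ x₀, Ppt F β pr x₀ := by
  by_contra hcon
  push_neg at hcon
  unfold Ppt at hcon
  push_neg at hcon
  choose Wf hWo hWm hbad using hcon
  have hcover : IsOpenCover {V : Set X | ∃ x, V = Wf x} := by
    constructor
    · rintro V ⟨x, rfl⟩; exact hWo x
    · rw [Set.sUnion_eq_univ_iff]
      exact fun y => ⟨Wf y, ⟨y, rfl⟩, hWm y⟩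
  have hmemapp := hmem β hβ
    (fun η hη => if h : η = β then {V : Set X | ∃ x, V = Wf x} else pr η (hη.lt_of_ne h))
    (by
      intro η hη
      by_cases h : η = β
      · rw [dif_pos h]; exact hcover
      · rw [dif_neg h]; exact hpr η (hη.lt_of_ne h))
  rw [dif_pos rfl] at hmemapp
  obtain ⟨x₁, hx₁⟩ := hmemapp
  obtain ⟨hβ', hns⟩ := hbad x₁ {V : Set X | ∃ x, V = Wf x} hcover
  apply hns
  have : Resp' F β pr hβ' {V : Set X | ∃ x, V = Wf x} = Wf x₁ := hx₁
  rw [this]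

variable [Nonempty X]

/-- A trapped point at position `(β, pr)`. -/
noncomputable def trapPt (β : Ordinal.{w}) (pr : (γ : Ordinal.{w}) → γ < β → Set (Set X)) : X :=
  if h : ∃ x₀, Ppt F β pr x₀ then h.choose else Classical.arbitrary X

/-- A cover for player I to play at position `(β, pr)` forcing II's response inside `W`. -/
noncomputable def covC (β : Ordinal.{w}) (pr : (γ : Ordinal.{w}) → γ < β → Set (Set X))
    (W : Set X) : Set (Set X) :=
  if h : ∃ 𝒰, IsOpenCover 𝒰 ∧ ∀ hβ, Resp' F β pr hβ 𝒰 ⊆ W then h.choose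
  else {Set.univ}

variable (U : X → ℕ → Set X)

/-- The play of Player I guided by `f : Ordinal → ℕ`: at inning `β`, force II's response
into the `f β`-th `G_δ` neighborhood of the current trapped point. -/
noncomputable def playf (f : Ordinal.{w} → ℕ) : Ordinal.{w} → Set (Set X) :=
  WellFounded.fix Ordinal.lt_wf
    (fun β ih => covC F β ih (U (trapPt F β ih) (f β)))

/-- Some index `n` with `x ∉ U t n`, when it exists. -/
noncomputable def pick (x t : X) : ℕ :=
  if h : ∃ n, x ∉ U t n then h.choose else 0

/-- The dodging guide of the point `x`. -/
noncomputable def dodge (x : X) : Ordinal.{w} → ℕ :=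
  WellFounded.fix Ordinal.lt_wf
    (fun β ih =>
      pick U x (trapPt F β (fun γ _ =>
        playf F U (fun δ => if h : δ < β then ih δ h else 0) γ)))

theorem playf_eq (f : Ordinal.{w} → ℕ) (β : Ordinal.{w}) :
    playf F U f β = covC F β (fun γ _ => playf F U f γ)
      (U (trapPt F β (fun γ _ => playf F U f γ)) (f β)) :=
  WellFounded.fix_eq _ _ _

/-- The play up to inning `β` depends only on `f ↾ (β+1)`. -/
theorem playf_congr : ∀ β : Ordinal.{w}, ∀ f g : Ordinal.{w} → ℕ,
    (∀ γ ≤ β, f γ = g γ) → playf F U f β = playf F U g β := by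
  intro β
  induction β using Ordinal.induction with
  | h β ih =>
    intro f g hfg
    rw [playf_eq, playf_eq]
    have h1 : (fun γ (_ : γ < β) => playf F U f γ) = (fun γ _ => playf F U g γ) := by
      funext γ hγ
      exact ih γ hγ f g (fun δ hδ => hfg δ (hδ.trans hγ.le))
    rw [h1, hfg β le_rfl]

theorem isOpenCover_univ_singleton : IsOpenCover ({Set.univ} : Set (Set X)) := by
  constructor
  · intro V hV
    rw [Set.mem_singleton_iff] at hV
    rw [hV]; exact isOpen_univ
  · rw [Set.sUnion_singleton]

theorem playf_isCover (f : Ordinal.{w} → ℕ) (β : Ordinal.{w}) :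
    IsOpenCover (playf F U f β) := by
  rw [playf_eq]
  unfold covC
  split_ifs with h
  · exact h.choose_spec.1
  · exact isOpenCover_univ_singleton

theorem dodge_eq (x : X) (β : Ordinal.{w}) :
    dodge F U x β = pick U x (trapPt F β (fun γ _ => playf F U (dodge F U x) γ)) := by
  have h0 : dodge F U x β = pick U x (trapPt F β (fun γ _ =>
      playf F U (fun δ => if h : δ < β then dodge F U x δ else 0) γ)) :=
    WellFounded.fix_eq _ _ _
  rw [h0]
  have h1 : (fun γ (_ : γ < β) =>
      playf F U (fun δ => if h : δ < β then dodge F U x δ else 0) γ)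
      = (fun γ (_ : γ < β) => playf F U (dodge F U x) γ) := by
    funext γ hγ
    exact playf_congr F U γ _ _ (fun δ hδ => dif_pos (lt_of_le_of_lt hδ hγ))
  rw [h1]

theorem trapPt_spec
    (hmem : ∀ (ξ : Ordinal.{w}) (hξ : ξ < (Cardinal.aleph 1).ord)
      (h : (η : Ordinal.{w}) → η ≤ ξ → Set (Set X)),
      (∀ η hη, IsOpenCover (h η hη)) → F ξ hξ h ∈ h ξ le_rfl)
    (β : Ordinal.{w}) (hβ : β < (Cardinal.aleph 1).ord)
    (pr : (γ : Ordinal.{w}) → γ < β → Set (Set X))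
    (hpr : ∀ γ hγ, IsOpenCover (pr γ hγ)) :
    Ppt F β pr (trapPt F β pr) := by
  have h := exists_trap F hmem β hβ pr hpr
  rw [trapPt, dif_pos h]
  exact h.choose_spec

theorem covC_spec (β : Ordinal.{w}) (pr : (γ : Ordinal.{w}) → γ < β → Set (Set X))
    (W : Set X)
    (h : ∃ 𝒰, IsOpenCover 𝒰 ∧ ∀ hβ, Resp' F β pr hβ 𝒰 ⊆ W) :
    ∀ hβ, Resp' F β pr hβ (covC F β pr W) ⊆ W := by
  rw [covC, dif_pos h]
  exact h.choose_spec.2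

theorem pick_spec (x t : X) (hne : x ≠ t) (hUi : ⋂ n, U t n = {t}) :
    x ∉ U t (pick U x t) := by
  have hex : ∃ n, x ∉ U t n := by
    by_contra hc
    push_neg at hc
    have : x ∈ ⋂ n, U t n := Set.mem_iInter.mpr hc
    rw [hUi] at this
    exact hne this
  rw [pick, dif_pos hex]
  exact hex.choose_spec

/-- Every point of `X` is the trapped point of some countable position of its own
dodging play. -/
theorem exists_code
    (hmem : ∀ (ξ : Ordinal.{w}) (hξ : ξ < (Cardinal.aleph 1).ord)
      (h : (η : Ordinal.{w}) → η ≤ ξ → Set (Set X)),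
      (∀ η hη, IsOpenCover (h η hη)) → F ξ hξ h ∈ h ξ le_rfl)
    (hcov : ∀ Up : Ordinal.{w} → Set (Set X),
      (∀ ξ < (Cardinal.aleph 1).ord, IsOpenCover (Up ξ)) →
      ⋃₀ {V | ∃ ξ, ∃ hξ : ξ < (Cardinal.aleph 1).ord, V = F ξ hξ fun η _ => Up η} = Set.univ)
    (hUo : ∀ t n, IsOpen (U t n)) (hUi : ∀ t : X, ⋂ n, U t n = {t}) :
    ∀ x : X, ∃ β : Ordinal.{w}, ∃ _ : β < (Cardinal.aleph 1).ord,
      x = trapPt F β (fun γ _ => playf F U (dodge F U x) γ) := by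
  intro x
  by_contra hc
  push_neg at hc
  have hcovapp := hcov (playf F U (dodge F U x)) (fun ξ _ => playf_isCover F U _ ξ)
  have hx : (x : X) ∈ ⋃₀ {V | ∃ ξ, ∃ hξ : ξ < (Cardinal.aleph 1).ord,
      V = F ξ hξ fun η _ => playf F U (dodge F U x) η} := by
    rw [hcovapp]; trivial
  obtain ⟨V, ⟨ξ, hξ, rfl⟩, hxV⟩ := hx
  have htp : Ppt F ξ (fun γ _ => playf F U (dodge F U x) γ)
      (trapPt F ξ (fun γ _ => playf F U (dodge F U x) γ)) :=
    trapPt_spec F hmem ξ hξ _ (fun γ _ => playf_isCover F U _ γ)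
  set t := trapPt F ξ (fun γ _ => playf F U (dodge F U x) γ) with ht
  have htm : t ∈ U t (dodge F U x ξ) := by
    have h1 : t ∈ ⋂ n, U t n := by rw [hUi t]; exact rfl
    exact Set.mem_iInter.mp h1 _
  have hex := htp (U t (dodge F U x ξ)) (hUo t _) htm
  have hsub := covC_spec F ξ (fun γ _ => playf F U (dodge F U x) γ) (U t (dodge F U x ξ)) hex hξ
  have hplay : playf F U (dodge F U x) ξ
      = covC F ξ (fun γ _ => playf F U (dodge F U x) γ) (U t (dodge F U x ξ)) := by
    rw [playf_eq]
  rw [← hplay] at hsub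
  have hrespeq : Resp' F ξ (fun γ _ => playf F U (dodge F U x) γ) hξ
      (playf F U (dodge F U x) ξ) = F ξ hξ (fun η _ => playf F U (dodge F U x) η) := by
    unfold Resp'
    refine congrArg (F ξ hξ) ?_
    funext η hη
    dsimp only
    by_cases h : η = ξ
    · rw [dif_pos h, h]
    · rw [dif_neg h]
  rw [hrespeq] at hsub
  have hxW : x ∈ U t (dodge F U x ξ) := hsub hxV
  have hne : x ≠ t := hc ξ hξ
  have hnotW : x ∉ U t (dodge F U x ξ) := by
    rw [dodge_eq]
    exact pick_spec U x t hne (hUi t)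
  exact hnotW hxW

/-- Cardinality bound for the code type. -/
theorem codeT_card_le :
    #(Σ β : ↥(Set.Iio ((Cardinal.aleph 1).ord : Ordinal.{w})),
        (↥(Set.Iio (β : Ordinal.{w})) → ℕ)) ≤ Cardinal.continuum.{w + 1} := by
  have hfib : ∀ β : ↥(Set.Iio ((Cardinal.aleph 1).ord : Ordinal.{w})),
      #(↥(Set.Iio (β : Ordinal.{w})) → ℕ) ≤ Cardinal.continuum.{w + 1} := by
    intro β
    have hcard : (β : Ordinal.{w}).card ≤ ℵ₀ := by
      have h1 : (β : Ordinal.{w}) < (Cardinal.aleph 1).ord := β.2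
      rw [Cardinal.lt_ord] at h1
      by_contra hgt
      push_neg at hgt
      have h2 : (Cardinal.aleph 1 : Cardinal.{w}) ≤ (β : Ordinal.{w}).card := by
        have h3 := Order.succ_le_of_lt hgt
        rwa [Cardinal.succ_aleph0] at h3
      exact (not_lt.mpr h2) h1
    have hmk : #(↥(Set.Iio (β : Ordinal.{w}))) ≤ ℵ₀ := by
      rw [Ordinal.mk_Iio_ordinal]
      calc Cardinal.lift.{w+1} (β : Ordinal.{w}).card
          ≤ Cardinal.lift.{w+1} ℵ₀ := Cardinal.lift_le.mpr hcard
        _ = ℵ₀ := Cardinal.lift_aleph0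
    have hctble : Countable ↥(Set.Iio (β : Ordinal.{w})) := Cardinal.mk_le_aleph0_iff.mp hmk
    obtain ⟨inj, hinj⟩ := (countable_iff_exists_injective _).mp hctble
    classical
    have hg : Function.Injective
        (fun f : (↥(Set.Iio (β : Ordinal.{w})) → ℕ) =>
          (⟨fun k => if h : ∃ a, inj a = k then f h.choose else 0⟩ : ULift.{w+1} (ℕ → ℕ))) := by
      intro f1 f2 hf
      funext a
      have h1 : ∃ a', inj a' = inj a := ⟨a, rfl⟩
      have h2 : h1.choose = a := hinj h1.choose_spec
      have := congrArg (fun z : ULift.{w+1} (ℕ → ℕ) => z.down (inj a)) hf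
      dsimp only at this
      rw [dif_pos h1, dif_pos h1, h2] at this
      exact this
    calc #(↥(Set.Iio (β : Ordinal.{w})) → ℕ)
        ≤ #(ULift.{w+1} (ℕ → ℕ)) := Cardinal.mk_le_of_injective hg
      _ = Cardinal.lift.{w+1} #(ℕ → ℕ) := Cardinal.mk_uLift _
      _ ≤ Cardinal.continuum.{w+1} := by
          rw [Cardinal.lift_le_continuum, ← Cardinal.power_def, Cardinal.mk_nat,
            Cardinal.aleph0_power_aleph0]
  have hidx : #(↥(Set.Iio ((Cardinal.aleph 1).ord : Ordinal.{w}))) ≤ Cardinal.continuum.{w+1} := by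
    rw [Ordinal.mk_Iio_ordinal, Cardinal.card_ord, Cardinal.lift_le_continuum]
    exact Cardinal.aleph_one_le_continuum
  calc #(Σ β : ↥(Set.Iio ((Cardinal.aleph 1).ord : Ordinal.{w})),
        (↥(Set.Iio (β : Ordinal.{w})) → ℕ))
      = Cardinal.sum (fun β : ↥(Set.Iio ((Cardinal.aleph 1).ord : Ordinal.{w})) =>
        #(↥(Set.Iio (β : Ordinal.{w})) → ℕ)) := Cardinal.mk_sigma _
    _ ≤ Cardinal.sum (fun _ : ↥(Set.Iio ((Cardinal.aleph 1).ord : Ordinal.{w})) =>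
        Cardinal.continuum.{w+1}) := Cardinal.sum_le_sum _ _ hfib
    _ = #(↥(Set.Iio ((Cardinal.aleph 1).ord : Ordinal.{w}))) * Cardinal.continuum.{w+1} :=
        Cardinal.sum_const' _ _
    _ ≤ Cardinal.continuum.{w+1} * Cardinal.continuum.{w+1} := mul_le_mul_left hidx _
    _ = Cardinal.continuum.{w+1} := Cardinal.mul_eq_self Cardinal.aleph0_le_continuum

end Stmt3Aux

/-- If `X` has points `G_δ` and player II has a winning strategy in `G₁^{ω₁}(𝒪,𝒪)` on `X`,
then `|X| ≤ 2^{ℵ₀}`. -/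
theorem stmt3 {X : Type*} [TopologicalSpace X]
    (hGδ : PointsGDelta X)
    (hwin : PlayerIIWinsG1OO X (Cardinal.aleph 1).ord) :
    #X ≤ Cardinal.continuum := by
  classical
  rcases isEmpty_or_nonempty X with hXe | hXn
  · exact le_trans (le_of_eq (Cardinal.mk_eq_zero X)) zero_le
  · obtain ⟨F, hmem, hcov⟩ := hwin
    choose U hUo hUi using hGδ
    have hall := Stmt3Aux.exists_code F U hmem hcov hUo hUi
    choose βf hβf heq using hall
    -- the decoding function
    set Code := (Σ β : ↥(Set.Iio (Cardinal.aleph 1).ord),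
        (↥(Set.Iio (β : Ordinal)) → ℕ)) with hCode
    let d : Code → X := fun q =>
      Stmt3Aux.trapPt F (q.1 : Ordinal) (fun γ _ =>
        Stmt3Aux.playf F U
          (fun δ => if h : δ < (q.1 : Ordinal) then q.2 ⟨δ, h⟩ else 0) γ)
    let c : X → Code := fun x =>
      ⟨⟨βf x, hβf x⟩, fun γ => Stmt3Aux.dodge F U x (γ : Ordinal)⟩
    have hdc : ∀ x : X, d (c x) = x := by
      intro x
      show Stmt3Aux.trapPt F (βf x) (fun γ _ =>
        Stmt3Aux.playf F U
          (fun δ => if h : δ < (βf x : Ordinal) then Stmt3Aux.dodge F U x δ else 0) γ) = x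
      have harg : (fun γ (_ : γ < βf x) =>
          Stmt3Aux.playf F U
            (fun δ => if h : δ < (βf x : Ordinal) then Stmt3Aux.dodge F U x δ else 0) γ)
          = (fun γ (_ : γ < βf x) => Stmt3Aux.playf F U (Stmt3Aux.dodge F U x) γ) := by
        funext γ hγ
        exact Stmt3Aux.playf_congr F U γ _ _
          (fun δ hδ => dif_pos (lt_of_le_of_lt hδ hγ))
      rw [harg]
      exact (heq x).symm
    have hinj : Function.Injective c := by
      intro x y hxy
      have := congrArg d hxy
      rwa [hdc x, hdc y] at this
    have h1 := Cardinal.lift_mk_le'.mpr ⟨⟨c, hinj⟩⟩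
    have h2 : #Code ≤ Cardinal.continuum := Stmt3Aux.codeT_card_le
    have h3 := (Cardinal.lift_le.mpr h2).trans_eq Cardinal.lift_continuum
    exact Cardinal.lift_le_continuum.mp (h1.trans h3)
end

section
/- Let X be a topological space and let F be a winning strategy for player II in the game G₁^{ω₁}(𝒦,𝒪) on X. Then for every ordinal β<ω₁ and every sequence (𝒰_α)_{α<β} of K-covers of X, there is a compact set K ⊆ X such that for every open set U with K ⊆ U there is a K-cover 𝒰 of X with F((𝒰_α)_{α<β}⌢𝒰) = U. -/
open Cardinal Set

/-- `C` is a `K`-cover of `X`: an open cover such that every compact subset of `X` is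
contained in some member of `C`. -/
def IsKCover {X : Type*} [TopologicalSpace X] (C : Set (Set X)) : Prop :=
  IsOpenCover C ∧ ∀ K : Set X, IsCompact K → ∃ U ∈ C, K ⊆ U

/-- If `F` is a winning strategy for player II in `G₁^{ω₁}(𝒦,𝒪)` on `X`, then for every
`β < ω₁` and every sequence `(𝒰_α)_{α < β}` of K-covers, there is a compact `K ⊆ X` such
that every open `U ⊇ K` is of the form `F((𝒰_α)_{α<β}⌢𝒰)` for some K-cover `𝒰`. -/
theorem stmt5 {X : Type*} [TopologicalSpace X]
    (F : (ξ : Ordinal) → ξ < (Cardinal.aleph 1).ord →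
      ((η : Ordinal) → η ≤ ξ → Set (Set X)) → Set X)
    (hFlegal : ∀ (ξ : Ordinal) (hξ : ξ < (Cardinal.aleph 1).ord)
      (h : (η : Ordinal) → η ≤ ξ → Set (Set X)),
      (∀ η hη, IsKCover (h η hη)) → F ξ hξ h ∈ h ξ le_rfl)
    (hFwin : ∀ U : Ordinal → Set (Set X),
      (∀ ξ < (Cardinal.aleph 1).ord, IsKCover (U ξ)) →
      ⋃₀ {V | ∃ ξ, ∃ hξ : ξ < (Cardinal.aleph 1).ord, V = F ξ hξ fun η _ => U η}
        = Set.univ)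
    (β : Ordinal) (hβ : β < (Cardinal.aleph 1).ord)
    (φ : (α : Ordinal) → α < β → Set (Set X)) (hφ : ∀ α hα, IsKCover (φ α hα)) :
    ∃ K : Set X, IsCompact K ∧ ∀ U : Set X, IsOpen U → K ⊆ U →
      ∃ 𝒰 : Set (Set X), IsKCover 𝒰 ∧
        F β hβ (fun α hα => if h : α < β then φ α h else 𝒰) = U := by
  by_contra hcon
  push_neg at hcon
  -- For each compact K, choose a bad open set g K ⊇ K
  choose g hgopen hgsub hgbad using hcon
  set 𝒱 : Set (Set X) := {U | ∃ K, ∃ h : IsCompact K, U = g K h} with h𝒱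
  have h𝒱K : IsKCover 𝒱 := by
    refine ⟨⟨?_, ?_⟩, ?_⟩
    · rintro U ⟨K, hK, rfl⟩; exact hgopen K hK
    · ext x
      simp only [Set.mem_sUnion, Set.mem_univ, iff_true]
      refine ⟨g {x} isCompact_singleton, ⟨{x}, isCompact_singleton, rfl⟩, ?_⟩
      exact hgsub {x} isCompact_singleton rfl
    · intro K hK
      exact ⟨g K hK, ⟨K, hK, rfl⟩, hgsub K hK⟩
  set h' : (η : Ordinal) → η ≤ β → Set (Set X) :=
    fun α _ => if h : α < β then φ α h else 𝒱 with hh'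
  have hall : ∀ η hη, IsKCover (h' η hη) := by
    intro η hη
    by_cases h : η < β
    · simp [hh', h]; exact hφ η h
    · simp [hh', h]; exact h𝒱K
  have hmem := hFlegal β hβ h' hall
  have : h' β le_rfl = 𝒱 := by simp [hh']
  rw [this] at hmem
  obtain ⟨K, hK, hEq⟩ := hmem
  exact hgbad K hK 𝒱 h𝒱K hEq
end

section
/- Let X be a Tychonoff (completely regular Hausdorff) space. Then player II has a winning strategy in the game G_fin(𝒪,𝒪) (of length ω) on X if and only if player II has a winning strategy in the game G₁(𝒦,𝒪) (of length ω) on X. -/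
open Cardinal Set

/-- Player II has a winning strategy in the Menger game `G_fin(𝒪,𝒪)` (of length `ω`)
on `X`: each inning player I plays an open cover and player II selects a finite subset
of it; player II wins when the selected families together cover `X`. -/
def PlayerIIWinsMenger (X : Type*) [TopologicalSpace X] : Prop :=
  ∃ σ : (n : ℕ) → ((i : ℕ) → i ≤ n → Set (Set X)) → Set (Set X),
    (∀ (n : ℕ) (h : (i : ℕ) → i ≤ n → Set (Set X)),
      (∀ i hi, IsOpenCover (h i hi)) → σ n h ⊆ h n le_rfl ∧ (σ n h).Finite) ∧
    (∀ U : ℕ → Set (Set X), (∀ n, IsOpenCover (U n)) →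
      ⋃₀ (⋃ n : ℕ, σ n fun i _ => U i) = Set.univ)

/-- Player II has a winning strategy in the game `G₁(𝒦,𝒪)` (of length `ω`) on `X`:
each inning player I plays a K-cover and player II selects one of its members;
player II wins when the selected sets cover `X`. -/
def PlayerIIWinsG1KOomega (X : Type*) [TopologicalSpace X] : Prop :=
  ∃ F : (n : ℕ) → ((i : ℕ) → i ≤ n → Set (Set X)) → Set X,
    (∀ (n : ℕ) (h : (i : ℕ) → i ≤ n → Set (Set X)),
      (∀ i hi, IsKCover (h i hi)) → F n h ∈ h n le_rfl) ∧
    (∀ U : ℕ → Set (Set X), (∀ n, IsKCover (U n)) →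
      ⋃₀ {V | ∃ n : ℕ, V = F n fun i _ => U i} = Set.univ)

/-! ### Auxiliary development for the proof (Telgársky's theorem)

The hard direction (`PlayerIIWinsMenger → PlayerIIWinsG1KOomega`) is proved by
embedding the Tychonoff space `X` into the compact Hausdorff cube
`Amb X = [0,1]^{C(X,[0,1])}` and extracting, for each simulated position of the
Menger game, finitely many "witness" open covers via compactness of the cube.
Player II in `G₁(𝒦,𝒪)` keeps a growing finite tree of simulated Menger positions
and at inning `n` picks a member of the played K-cover containing the (compact)
union of the "kernels" of all current positions.  If some point `x` were missed
by all picks, one could build an infinite branch of the tree along which all of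
player II's (finite) selections in the simulated Menger game avoid `x`,
contradicting that the Menger strategy is winning. -/

noncomputable section
namespace TelgarskyAux

open scoped Classical

set_option linter.unusedSectionVars false

variable {X : Type*} [TopologicalSpace X]

/-- The ambient cube. -/
abbrev Amb (X : Type*) [TopologicalSpace X] : Type _ := C(X, unitInterval) → unitInterval

/-- The canonical evaluation map into the cube. -/
def emb (x : X) : Amb X := fun f => f x

lemma continuous_emb : Continuous (emb (X := X)) :=
  continuous_pi fun f => f.continuous

variable [T35Space X]

lemma sep {x : X} {A : Set X} (hA : IsClosed A) (hx : x ∉ A) :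
    ∃ f : C(X, unitInterval), f x = 0 ∧ ∀ a ∈ A, f a = 1 := by
  obtain ⟨f, hf, hf0, hf1⟩ := CompletelyRegularSpace.completely_regular x A hA hx
  exact ⟨⟨f, hf⟩, hf0, fun a ha => hf1 ha⟩

lemma not_mem_closure_image {A : Set X} (hA : IsClosed A) {y : X} (hy : y ∉ A) :
    emb y ∉ closure (emb '' A) := by
  obtain ⟨f, hf0, hf1⟩ := sep hA hy
  intro hmem
  have hcl : closure (emb '' A) ⊆ (fun z : Amb X => z f) ⁻¹' {1} := by
    refine closure_minimal ?_ (IsClosed.preimage (continuous_apply f) isClosed_singleton)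
    rintro _ ⟨a, ha, rfl⟩
    exact hf1 a ha
  have h1 : emb y f = 1 := hcl hmem
  have : (0 : unitInterval) = 1 := by rw [← hf0]; exact h1
  exact zero_ne_one this

lemma exists_open_sep {x : X} {U : Set X} (hU : IsOpen U) (hx : x ∈ U) :
    ∃ W : Set (Amb X), IsOpen W ∧ emb x ∈ W ∧ emb ⁻¹' W ⊆ U := by
  obtain ⟨f, hf0, hf1⟩ := sep hU.isClosed_compl (by simpa using hx)
  refine ⟨(fun z : Amb X => z f) ⁻¹' {t : unitInterval | (t : ℝ) < 1}, ?_, ?_, ?_⟩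
  · exact (isOpen_lt continuous_subtype_val continuous_const).preimage (continuous_apply f)
  · show ((f x : unitInterval) : ℝ) < 1
    rw [hf0]; norm_num
  · intro y hy
    by_contra hyU
    have h1 : f y = 1 := hf1 y hyU
    simp only [mem_preimage, mem_setOf_eq] at hy
    change ((emb y f : unitInterval) : ℝ) < 1 at hy
    rw [show emb y f = f y from rfl, h1] at hy
    norm_num at hy

lemma exists_open_away {z p : Amb X} (hne : z ≠ p) :
    ∃ W : Set (Amb X), IsOpen W ∧ z ∈ W ∧ p ∉ closure W := by
  obtain ⟨W, W', hW, hW', hz, hp, hd⟩ := t2_separation hne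
  refine ⟨W, hW, hz, fun hcl => ?_⟩
  have : closure W ⊆ W'ᶜ := closure_minimal (fun a ha hb => hd.le_bot ⟨ha, hb⟩) hW'.isClosed_compl
  exact this hcl hp

/-! #### Simulated Menger positions -/

variable (σ : (n : ℕ) → ((i : ℕ) → i ≤ n → Set (Set X)) → Set (Set X))

/-- Player II's (Menger) selection at the position given by the list `l` of covers. -/
def resp (l : List (Set (Set X))) : Set (Set X) :=
  σ (l.length - 1) (fun i _ => l.getD i ∅)

/-- The union of player II's selection at position `l`. -/
def respU (l : List (Set (Set X))) : Set X := ⋃₀ resp σ l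

/-- All entries of the list are open covers. -/
def GoodL (l : List (Set (Set X))) : Prop := ∀ C ∈ l, IsOpenCover C

/-- Legality of the Menger strategy. -/
def Leg : Prop := ∀ (n : ℕ) (h : (i : ℕ) → i ≤ n → Set (Set X)),
    (∀ i hi, IsOpenCover (h i hi)) → σ n h ⊆ h n le_rfl ∧ (σ n h).Finite

lemma resp_spec (hleg : Leg σ) {l : List (Set (Set X))} (hl : GoodL l) {C : Set (Set X)}
    (hC : IsOpenCover C) : resp σ (l ++ [C]) ⊆ C ∧ (resp σ (l ++ [C])).Finite := by
  have hlen : (l ++ [C]).length - 1 = l.length := by simp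
  have hget : ∀ i (hi : i ≤ (l ++ [C]).length - 1), IsOpenCover ((l ++ [C]).getD i ∅) := by
    intro i hi
    rw [hlen] at hi
    rcases lt_or_eq_of_le hi with h | h
    · rw [List.getD_append l [C] ∅ i h, List.getD_eq_getElem l ∅ h]
      exact hl _ (List.getElem_mem h)
    · subst h
      rw [List.getD_append_right l [C] ∅ _ le_rfl]
      simpa using hC
  have := hleg ((l ++ [C]).length - 1) (fun i _ => (l ++ [C]).getD i ∅) hget
  refine ⟨subset_trans this.1 ?_, this.2⟩
  rw [hlen,
    List.getD_append_right l [C] ∅ _ le_rfl]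
  simp

/-- The kernel of position `l` in the ambient cube: the set of points of the cube lying in
the closure of (the image of) every possible selection one inning later. -/
def Ktilde (l : List (Set (Set X))) : Set (Amb X) :=
  ⋂ C ∈ {C : Set (Set X) | IsOpenCover C}, closure (emb '' respU σ (l ++ [C]))

/-- The kernel of position `l` as a subset of `X`. -/
def KX (l : List (Set (Set X))) : Set X := emb ⁻¹' Ktilde σ l

lemma isClosed_Ktilde (l : List (Set (Set X))) : IsClosed (Ktilde σ l) :=
  isClosed_biInter fun _ _ => isClosed_closure

lemma Ktilde_subset_range (hleg : Leg σ) {l : List (Set (Set X))} (hl : GoodL l) :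
    Ktilde σ l ⊆ range (emb (X := X)) := by
  intro p hp
  by_contra hpr
  have hW : ∀ x : X, ∃ W : Set (Amb X), IsOpen W ∧ emb x ∈ W ∧ p ∉ closure W := by
    intro x
    exact exists_open_away (fun h => hpr ⟨x, h⟩)
  choose W hWo hWm hWp using hW
  set C : Set (Set X) := range (fun x => emb ⁻¹' W x) with hCdef
  have hC : IsOpenCover C := by
    constructor
    · rintro _ ⟨x, rfl⟩
      exact (hWo x).preimage continuous_emb
    · apply eq_univ_of_forall
      intro x
      exact ⟨emb ⁻¹' W x, ⟨x, rfl⟩, hWm x⟩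
  have hp' : p ∈ closure (emb '' respU σ (l ++ [C])) := mem_iInter₂.1 hp C hC
  obtain ⟨hsub, hfin⟩ := resp_spec σ hleg hl hC
  have hcls : closure (emb '' respU σ (l ++ [C])) ⊆ ⋃ V ∈ resp σ (l ++ [C]), closure (emb '' V) := by
    rw [← Set.Finite.closure_biUnion hfin]
    apply closure_mono
    rintro _ ⟨y, hy, rfl⟩
    obtain ⟨V, hV, hyV⟩ := hy
    exact mem_biUnion hV ⟨y, hyV, rfl⟩
  obtain ⟨V, hV, hpV⟩ := mem_iUnion₂.1 (hcls hp')
  obtain ⟨x, rfl⟩ := hsub hV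
  exact hWp x (closure_mono (image_preimage_subset emb (W x)) hpV)

lemma isCompact_KX (hleg : Leg σ) {l : List (Set (Set X))} (hl : GoodL l) :
    IsCompact (KX σ l) := by
  have hKt : IsCompact (Ktilde σ l) := (isClosed_Ktilde σ l).isCompact
  apply isCompact_of_finite_subcover
  intro ι U hUo hcov
  letI := Classical.decEq ι
  have hz : ∀ z : ↥(Ktilde σ l), ∃ (i : ι) (W : Set (Amb X)),
      IsOpen W ∧ (z : Amb X) ∈ W ∧ emb ⁻¹' W ⊆ U i := by
    rintro ⟨z, hz⟩
    obtain ⟨x, rfl⟩ := Ktilde_subset_range σ hleg hl hz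
    have hx : x ∈ KX σ l := hz
    obtain ⟨i, hi⟩ := mem_iUnion.1 (hcov hx)
    obtain ⟨W, hWo, hWm, hWs⟩ := exists_open_sep (hUo i) hi
    exact ⟨i, W, hWo, hWm, hWs⟩
  choose idx W hWo hWm hWs using hz
  obtain ⟨t, ht⟩ := hKt.elim_finite_subcover W hWo
    (fun z hz => mem_iUnion.2 ⟨⟨z, hz⟩, hWm _⟩)
  refine ⟨t.image idx, ?_⟩
  intro x hx
  have hxk : emb x ∈ Ktilde σ l := hx
  obtain ⟨z, hzt, hzW⟩ := mem_iUnion₂.1 (ht hxk)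
  exact mem_biUnion (Finset.mem_image_of_mem idx hzt) (hWs z hzW)

lemma extraction (hleg : Leg σ) {l : List (Set (Set X))} (hl : GoodL l) {P : Set X}
    (hPo : IsOpen P) (hKP : KX σ l ⊆ P) :
    ∃ t : Finset {C : Set (Set X) // IsOpenCover C},
      closure (emb '' Pᶜ) ∩ ⋂ C ∈ t, closure (emb '' respU σ (l ++ [C.1])) = ∅ := by
  have hs : IsCompact (closure (emb '' (Pᶜ : Set X))) := isClosed_closure.isCompact
  apply hs.elim_finite_subfamily_closed
    (fun C : {C : Set (Set X) // IsOpenCover C} => closure (emb '' respU σ (l ++ [C.1])))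
    (fun _ => isClosed_closure)
  rw [eq_empty_iff_forall_notMem]
  rintro z ⟨hz1, hz2⟩
  have hzK : z ∈ Ktilde σ l := by
    rw [Ktilde, biInter_eq_iInter]
    exact hz2
  obtain ⟨y, rfl⟩ := Ktilde_subset_range σ hleg hl hzK
  have hy : y ∈ P := hKP hzK
  exact not_mem_closure_image hPo.isClosed_compl (fun h => h hy) hz1

/-! #### The tree of simulated positions -/

/-- The children of position `l`, relative to the pick `P`: extensions of `l` by the
finitely many witness covers extracted by compactness. -/
def childrenF (l : List (Set (Set X))) (P : Set X) : List (List (Set (Set X))) :=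
  if H : ∃ t : Finset {C : Set (Set X) // IsOpenCover C},
      closure (emb '' Pᶜ) ∩ ⋂ C ∈ t, closure (emb '' respU σ (l ++ [C.1])) = ∅
  then H.choose.toList.map (fun C => l ++ [C.1]) else []

/-- The union of kernels over a finite family of positions. -/
def KofT (ts : List (List (Set (Set X)))) : Set X := ⋃ l ∈ ts, KX σ l

/-- Player II's pick from the cover `C`: some member containing the requested compact set. -/
def pickOf (C : Set (Set X)) (ts : List (List (Set (Set X)))) : Set X :=
  if h : ∃ V ∈ C, KofT σ ts ⊆ V then h.choose else ∅

/-- The finite tree of positions at inning `n`, given the covers played so far. -/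
def TT (U : ℕ → Set (Set X)) : ℕ → List (List (Set (Set X)))
  | 0 => [[]]
  | n + 1 => TT U n ++ (TT U n).flatMap (fun l => childrenF σ l (pickOf σ (U n) (TT U n)))

/-- Player II's pick at inning `n`. -/
def pickN (U : ℕ → Set (Set X)) (n : ℕ) : Set X := pickOf σ (U n) (TT σ U n)

lemma goodT (U : ℕ → Set (Set X)) : ∀ n, ∀ l ∈ TT σ U n, GoodL l := by
  intro n
  induction n with
  | zero =>
    intro l hl
    simp only [TT, List.mem_singleton] at hl
    subst hl
    intro C hC
    exact absurd hC List.not_mem_nil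
  | succ n ih =>
    intro l hl
    rw [TT, List.mem_append] at hl
    rcases hl with hl | hl
    · exact ih l hl
    · rw [List.mem_flatMap] at hl
      obtain ⟨t, ht, hc⟩ := hl
      rw [childrenF] at hc
      split at hc
      · rw [List.mem_map] at hc
        obtain ⟨C, hCt, rfl⟩ := hc
        intro D hD
        rw [List.mem_append] at hD
        rcases hD with hD | hD
        · exact ih t ht D hD
        · rw [List.mem_singleton] at hD
          subst hD
          exact C.2
      · exact absurd hc List.not_mem_nil

lemma monoT (U : ℕ → Set (Set X)) {m n : ℕ} (h : m ≤ n) :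
    ∀ l ∈ TT σ U m, l ∈ TT σ U n := by
  induction n with
  | zero =>
    intro l hl
    rwa [Nat.le_zero.1 h] at hl
  | succ n ih =>
    intro l hl
    rcases Nat.lt_or_ge m (n + 1) with h' | h'
    · rw [TT, List.mem_append]
      exact Or.inl (ih (Nat.lt_succ_iff.1 h') l hl)
    · rwa [Nat.le_antisymm h h'] at hl

lemma isCompact_KofT (hleg : Leg σ) (U : ℕ → Set (Set X)) (n : ℕ) :
    IsCompact (KofT σ (TT σ U n)) := by
  apply Set.Finite.isCompact_biUnion (List.finite_toSet _)
  intro l hl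
  exact isCompact_KX σ hleg (goodT σ U n l hl)

lemma TT_stable {U U' : ℕ → Set (Set X)} : ∀ {n}, (∀ i < n, U i = U' i) →
    TT σ U n = TT σ U' n := by
  intro n
  induction n with
  | zero => intro _; rfl
  | succ n ih =>
    intro h
    have h1 : TT σ U n = TT σ U' n := ih fun i hi => h i (Nat.lt_succ_of_lt hi)
    rw [TT, TT, h1, h n (Nat.lt_succ_self n)]

lemma pickN_stable {U U' : ℕ → Set (Set X)} {n : ℕ} (h : ∀ i ≤ n, U i = U' i) :
    pickN σ U n = pickN σ U' n := by
  rw [pickN, pickN, TT_stable σ (fun i hi => h i (Nat.le_of_lt hi)), h n le_rfl]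

lemma pickN_spec (hleg : Leg σ) {U : ℕ → Set (Set X)} {n : ℕ} (hU : IsKCover (U n)) :
    pickN σ U n ∈ U n ∧ KofT σ (TT σ U n) ⊆ pickN σ U n := by
  have hex : ∃ V ∈ U n, KofT σ (TT σ U n) ⊆ V :=
    hU.2 _ (isCompact_KofT σ hleg U n)
  rw [pickN, pickOf, dif_pos hex]
  exact ⟨hex.choose_spec.1, hex.choose_spec.2⟩

/-- The key escape step: if `x` misses every pick, then every position in the tree has,
one inning later, a child in the tree whose selection also misses `x`. -/
lemma step (hleg : Leg σ) {U : ℕ → Set (Set X)} (hU : ∀ n, IsKCover (U n)) {x : X}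
    (hx : ∀ n, x ∉ pickN σ U n) {m : ℕ} {l : List (Set (Set X))} (hl : l ∈ TT σ U m) :
    ∃ C : Set (Set X), IsOpenCover C ∧ (l ++ [C]) ∈ TT σ U (m + 1) ∧
      x ∉ respU σ (l ++ [C]) := by
  have hPU := pickN_spec σ hleg (hU m)
  have hPo : IsOpen (pickN σ U m) := (hU m).1.1 _ hPU.1
  have hKP : KX σ l ⊆ pickN σ U m := by
    intro y hy
    exact hPU.2 (mem_iUnion₂.2 ⟨l, hl, hy⟩)
  have Hex : ∃ t : Finset {C : Set (Set X) // IsOpenCover C},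
      closure (emb '' (pickOf σ (U m) (TT σ U m))ᶜ) ∩
        ⋂ C ∈ t, closure (emb '' respU σ (l ++ [C.1])) = ∅ :=
    extraction σ hleg (goodT σ U m l hl) hPo hKP
  have hxP : emb x ∈ closure (emb '' (pickOf σ (U m) (TT σ U m))ᶜ) :=
    subset_closure ⟨x, hx m, rfl⟩
  have hxi : emb x ∉ ⋂ C ∈ Hex.choose, closure (emb '' respU σ (l ++ [C.1])) := by
    intro hmem
    have : emb x ∈ (∅ : Set (Amb X)) := by
      rw [← Hex.choose_spec]
      exact ⟨hxP, hmem⟩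
    exact absurd this (notMem_empty _)
  rw [mem_iInter₂] at hxi
  push_neg at hxi
  obtain ⟨C, hCt, hC⟩ := hxi
  refine ⟨C.1, C.2, ?_, ?_⟩
  · rw [TT, List.mem_append]
    right
    rw [List.mem_flatMap]
    refine ⟨l, hl, ?_⟩
    rw [childrenF, dif_pos Hex, List.mem_map]
    exact ⟨C, Finset.mem_toList.2 hCt, rfl⟩
  · intro hresp
    exact hC (subset_closure ⟨x, hresp, rfl⟩)

/-! #### The escaping branch -/

/-- The state of the escaping branch: a position in the tree all of whose nonempty
prefixes have selections missing `x`. -/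
def BState (U : ℕ → Set (Set X)) (x : X) : Type _ :=
  {p : List (Set (Set X)) × ℕ // p.1 ∈ TT σ U p.2 ∧
    ∀ k, 0 < k → k ≤ p.1.length → x ∉ respU σ (p.1.take k)}

/-- The cover extending the branch by one step. -/
def theC (hleg : Leg σ) {U : ℕ → Set (Set X)} (hU : ∀ n, IsKCover (U n)) {x : X}
    (hx : ∀ n, x ∉ pickN σ U n) (p : BState σ U x) : Set (Set X) :=
  (step σ hleg hU hx p.2.1).choose

lemma theC_spec (hleg : Leg σ) {U : ℕ → Set (Set X)} (hU : ∀ n, IsKCover (U n)) {x : X}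
    (hx : ∀ n, x ∉ pickN σ U n) (p : BState σ U x) :
    IsOpenCover (theC σ hleg hU hx p) ∧
      (p.1.1 ++ [theC σ hleg hU hx p]) ∈ TT σ U (p.1.2 + 1) ∧
      x ∉ respU σ (p.1.1 ++ [theC σ hleg hU hx p]) :=
  (step σ hleg hU hx p.2.1).choose_spec

/-- One step of the escaping branch. -/
def bnext (hleg : Leg σ) {U : ℕ → Set (Set X)} (hU : ∀ n, IsKCover (U n)) {x : X}
    (hx : ∀ n, x ∉ pickN σ U n) (p : BState σ U x) : BState σ U x := by
  refine ⟨(p.1.1 ++ [theC σ hleg hU hx p], p.1.2 + 1),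
    (theC_spec σ hleg hU hx p).2.1, ?_⟩
  intro k hk0 hk
  rcases Nat.lt_or_ge k (p.1.1.length + 1) with h | h
  · have hk' : k ≤ p.1.1.length := Nat.lt_succ_iff.1 h
    rw [List.take_append_of_le_length hk']
    exact p.2.2 k hk0 hk'
  · have hlen : (p.1.1 ++ [theC σ hleg hU hx p]).length ≤ k := by
      simpa using h
    rw [List.take_of_length_le hlen]
    exact (theC_spec σ hleg hU hx p).2.2

/-- The escaping branch. -/
def bseq (hleg : Leg σ) {U : ℕ → Set (Set X)} (hU : ∀ n, IsKCover (U n)) {x : X}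
    (hx : ∀ n, x ∉ pickN σ U n) : ℕ → BState σ U x
  | 0 => ⟨([], 0), by
      constructor
      · simp [TT]
      · intro k hk0 hk
        exfalso
        rw [List.length_nil, Nat.le_zero] at hk
        omega⟩
  | j + 1 => bnext σ hleg hU hx (bseq hleg hU hx j)

/-- The run of covers along the escaping branch. -/
def runW (hleg : Leg σ) {U : ℕ → Set (Set X)} (hU : ∀ n, IsKCover (U n)) {x : X}
    (hx : ∀ n, x ∉ pickN σ U n) (j : ℕ) : Set (Set X) :=
  theC σ hleg hU hx (bseq σ hleg hU hx j)

lemma bseq_succ_list (hleg : Leg σ) {U : ℕ → Set (Set X)} (hU : ∀ n, IsKCover (U n)) {x : X}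
    (hx : ∀ n, x ∉ pickN σ U n) (j : ℕ) :
    (bseq σ hleg hU hx (j + 1)).1.1 =
      (bseq σ hleg hU hx j).1.1 ++ [runW σ hleg hU hx j] := rfl

lemma bseq_len (hleg : Leg σ) {U : ℕ → Set (Set X)} (hU : ∀ n, IsKCover (U n)) {x : X}
    (hx : ∀ n, x ∉ pickN σ U n) : ∀ j, (bseq σ hleg hU hx j).1.1.length = j := by
  intro j
  induction j with
  | zero => rfl
  | succ j ih =>
    rw [bseq_succ_list]
    simp [ih]

lemma bseq_getD (hleg : Leg σ) {U : ℕ → Set (Set X)} (hU : ∀ n, IsKCover (U n)) {x : X}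
    (hx : ∀ n, x ∉ pickN σ U n) :
    ∀ j i, i < j → (bseq σ hleg hU hx j).1.1.getD i ∅ = runW σ hleg hU hx i := by
  intro j
  induction j with
  | zero => intro i hi; omega
  | succ j ih =>
    intro i hi
    rw [bseq_succ_list]
    rcases Nat.lt_or_ge i j with h | h
    · rw [List.getD_append _ _ ∅ i (by rw [bseq_len]; exact h)]
      exact ih i h
    · have hij : i = j := by omega
      subst hij
      rw [List.getD_append_right _ _ ∅ _ (by rw [bseq_len])]
      rw [bseq_len]
      simp

lemma bseq_avoid (hleg : Leg σ) {U : ℕ → Set (Set X)} (hU : ∀ n, IsKCover (U n)) {x : X}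
    (hx : ∀ n, x ∉ pickN σ U n) (n : ℕ) :
    x ∉ respU σ (bseq σ hleg hU hx (n + 1)).1.1 := by
  have h := (bseq σ hleg hU hx (n + 1)).2.2 (n + 1) (Nat.succ_pos n)
    (by rw [bseq_len])
  rwa [List.take_of_length_le (by rw [bseq_len])] at h

lemma sUnion_sigma_congr {m n : ℕ} (h : m = n)
    {f : (i : ℕ) → i ≤ m → Set (Set X)} {g : (i : ℕ) → i ≤ n → Set (Set X)}
    (hfg : ∀ i (him : i ≤ m) (hin : i ≤ n), f i him = g i hin) :
    ⋃₀ σ m f = ⋃₀ σ n g := by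
  subst h
  have : f = g := by
    funext i hi
    exact hfg i hi hi
  rw [this]

/-- The main covering lemma: the picks cover `X`. -/
lemma main (hleg : Leg σ)
    (hwin : ∀ U : ℕ → Set (Set X), (∀ n, IsOpenCover (U n)) →
      ⋃₀ (⋃ n : ℕ, σ n fun i _ => U i) = Set.univ)
    {U : ℕ → Set (Set X)} (hU : ∀ n, IsKCover (U n)) (x : X) :
    ∃ n, x ∈ pickN σ U n := by
  by_contra hx
  push_neg at hx
  have hWoc : ∀ j, IsOpenCover (runW σ hleg hU hx j) :=
    fun j => (theC_spec σ hleg hU hx (bseq σ hleg hU hx j)).1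
  have := hwin (runW σ hleg hU hx) hWoc
  have hxin : x ∈ ⋃₀ (⋃ n : ℕ, σ n fun i _ => runW σ hleg hU hx i) := by
    rw [this]; trivial
  obtain ⟨V, hV, hxV⟩ := hxin
  obtain ⟨n, hVn⟩ := mem_iUnion.1 hV
  -- show x ∈ respU σ (bseq (n+1)).1.1, contradiction
  apply bseq_avoid σ hleg hU hx n
  have hm : (bseq σ hleg hU hx (n + 1)).1.1.length - 1 = n := by
    rw [bseq_len]
    omega
  have heq : respU σ (bseq σ hleg hU hx (n + 1)).1.1 =
      ⋃₀ σ n (fun i _ => runW σ hleg hU hx i) := by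
    rw [respU, resp]
    apply sUnion_sigma_congr σ hm
    intro i him hin
    exact bseq_getD σ hleg hU hx (n + 1) i (by omega)
  rw [heq]
  exact ⟨V, hVn, hxV⟩

end TelgarskyAux

/-! ### The two directions -/

theorem menger_to_g1 {X : Type*} [TopologicalSpace X] [T35Space X]
    (h : PlayerIIWinsMenger X) : PlayerIIWinsG1KOomega X := by
  classical
  obtain ⟨σ, hleg, hwin⟩ := h
  have hleg' : TelgarskyAux.Leg σ := hleg
  refine ⟨fun n h => TelgarskyAux.pickN σ (fun i => if hi : i ≤ n then h i hi else {Set.univ}) n,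
    ?_, ?_⟩
  · intro n h hK
    have hKn : IsKCover ((fun i => if hi : i ≤ n then h i hi else {Set.univ}) n) := by
      simp only [dif_pos (le_refl n)]
      exact hK n le_rfl
    have := (TelgarskyAux.pickN_spec σ hleg'
      (U := fun i => if hi : i ≤ n then h i hi else {Set.univ}) (n := n) hKn).1
    simpa only [dif_pos (le_refl n)] using this
  · intro U hU
    apply eq_univ_of_forall
    intro x
    obtain ⟨n, hn⟩ := TelgarskyAux.main σ hleg' hwin hU x
    refine ⟨TelgarskyAux.pickN σ (fun i => if hi : i ≤ n then U i else {Set.univ}) n,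
      ⟨n, rfl⟩, ?_⟩
    have hst : TelgarskyAux.pickN σ (fun i => if hi : i ≤ n then U i else {Set.univ}) n
        = TelgarskyAux.pickN σ U n :=
      TelgarskyAux.pickN_stable σ (fun i hi => by simp [hi])
    rw [hst]
    exact hn

/-- Closure of a cover under finite unions. -/
def starC {X : Type*} [TopologicalSpace X] (C : Set (Set X)) : Set (Set X) :=
  {V | ∃ G : Set (Set X), G ⊆ C ∧ G.Finite ∧ V = ⋃₀ G}

lemma isKCover_starC {X : Type*} [TopologicalSpace X] {C : Set (Set X)}
    (h : IsOpenCover C) : IsKCover (starC C) := by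
  refine ⟨⟨?_, ?_⟩, ?_⟩
  · rintro V ⟨G, hGC, hGfin, rfl⟩
    exact isOpen_sUnion fun U hU => h.1 U (hGC hU)
  · apply Set.eq_univ_of_forall
    intro x
    have hx : x ∈ ⋃₀ C := h.2 ▸ Set.mem_univ x
    obtain ⟨U, hU, hxU⟩ := hx
    exact ⟨U, ⟨{U}, by simpa using hU, Set.finite_singleton U, by simp⟩, by simpa using hxU⟩
  · intro K hK
    have hcov : K ⊆ ⋃ U : C, (U : Set X) := by
      intro x hx
      have : x ∈ ⋃₀ C := h.2 ▸ Set.mem_univ x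
      obtain ⟨U, hU, hxU⟩ := this
      exact Set.mem_iUnion.2 ⟨⟨U, hU⟩, hxU⟩
    obtain ⟨t, ht⟩ := hK.elim_finite_subcover (fun U : C => (U : Set X))
      (fun U => h.1 U U.2) hcov
    refine ⟨⋃₀ (Subtype.val '' (t : Set C)), ⟨Subtype.val '' (t : Set C), ?_, ?_, rfl⟩, ?_⟩
    · rintro _ ⟨U, _, rfl⟩; exact U.2
    · exact (t.finite_toSet).image _
    · intro x hx
      obtain ⟨U, hUt, hxU⟩ := Set.mem_iUnion₂.1 (ht hx)
      exact ⟨U, ⟨U, hUt, rfl⟩, hxU⟩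

theorem g1_to_menger {X : Type*} [TopologicalSpace X]
    (h : PlayerIIWinsG1KOomega X) : PlayerIIWinsMenger X := by
  classical
  obtain ⟨F, hleg, hwin⟩ := h
  refine ⟨fun n h => if H : ∃ G : Set (Set X), G ⊆ h n le_rfl ∧ G.Finite ∧
      F n (fun i hi => starC (h i hi)) = ⋃₀ G then H.choose else ∅, ?_, ?_⟩
  · intro n h hOC
    have hK : ∀ i (hi : i ≤ n), IsKCover (starC (h i hi)) :=
      fun i hi => isKCover_starC (hOC i hi)
    have hmem := hleg n (fun i hi => starC (h i hi)) hK
    obtain ⟨G, hGsub, hGfin, hGeq⟩ := hmem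
    have H : ∃ G : Set (Set X), G ⊆ h n le_rfl ∧ G.Finite ∧
        F n (fun i hi => starC (h i hi)) = ⋃₀ G := ⟨G, hGsub, hGfin, hGeq⟩
    simp only [dif_pos H]
    exact ⟨H.choose_spec.1, H.choose_spec.2.1⟩
  · intro U hU
    apply Set.eq_univ_of_forall
    intro x
    have hKC : ∀ n, IsKCover (starC (U n)) := fun n => isKCover_starC (hU n)
    have hcov := hwin (fun n => starC (U n)) hKC
    have hx : x ∈ ⋃₀ {V | ∃ n : ℕ, V = F n fun i _ => starC (U i)} := hcov ▸ Set.mem_univ x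
    obtain ⟨V, ⟨n, rfl⟩, hxV⟩ := hx
    have hK : ∀ i (hi : i ≤ n), IsKCover (starC (U i)) := fun i _ => hKC i
    have hmem := hleg n (fun i _ => starC (U i)) hK
    obtain ⟨G, hGsub, hGfin, hGeq⟩ := hmem
    have H : ∃ G : Set (Set X), G ⊆ U n ∧ G.Finite ∧
        (F n fun i _ => starC (U i)) = ⋃₀ G := ⟨G, hGsub, hGfin, hGeq⟩
    have hxG : x ∈ ⋃₀ H.choose := by
      rw [← H.choose_spec.2.2]
      exact hxV
    obtain ⟨W, hWG, hxW⟩ := hxG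
    exact ⟨W, Set.mem_iUnion.2 ⟨n, by simp only [dif_pos H]; exact hWG⟩, hxW⟩

/-- (Telgársky) For a Tychonoff space `X`, player II has a winning strategy in
`G_fin(𝒪,𝒪)` iff player II has a winning strategy in `G₁(𝒦,𝒪)`. -/
theorem stmt10 {X : Type*} [TopologicalSpace X] [T35Space X] :
    PlayerIIWinsMenger X ↔ PlayerIIWinsG1KOomega X :=
  ⟨menger_to_g1, g1_to_menger⟩
end
end

section
/- Let X be a first countable topological space. If for every open neighborhood assignment (V_x)_{x∈X} player II has a winning strategy in the game G((V_x)_{x∈X}), then player II has a winning strategy in the game G₁^{ω₁}(𝒪,𝒟) on X. -/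
open Cardinal Set

/-- `V` is an open neighborhood assignment for `X`: each `V x` is an open set
containing `x`. -/
def IsONA {X : Type*} [TopologicalSpace X] (V : X → Set X) : Prop :=
  ∀ x, IsOpen (V x) ∧ x ∈ V x

/-- Player II has a winning strategy in the game `G((V_x)_{x∈X})` of length `ω₁`:
at inning `ξ < ω₁` player I chooses an open cover and player II picks one of its members
`C_ξ`; player II wins if for every `x ∈ X` there is `ξ < ω₁` with `V x ∩ C_ξ ≠ ∅`. -/
def PlayerIIWinsONAGame {X : Type*} [TopologicalSpace X] (V : X → Set X) : Prop :=
  ∃ F : (ξ : Ordinal.{0}) → ξ < (Cardinal.aleph 1).ord →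
      ((η : Ordinal.{0}) → η ≤ ξ → Set (Set X)) → Set X,
    (∀ (ξ : Ordinal.{0}) (hξ : ξ < (Cardinal.aleph 1).ord)
      (h : (η : Ordinal.{0}) → η ≤ ξ → Set (Set X)),
      (∀ η hη, IsOpenCover (h η hη)) → F ξ hξ h ∈ h ξ le_rfl) ∧
    (∀ U : Ordinal.{0} → Set (Set X),
      (∀ ξ < (Cardinal.aleph 1).ord, IsOpenCover (U ξ)) →
      ∀ x : X, ∃ ξ, ∃ hξ : ξ < (Cardinal.aleph 1).ord,
        (V x ∩ F ξ hξ fun η _ => U η).Nonempty)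

/-- Player II has a winning strategy in the game `G₁^{ω₁}(𝒪,𝒟)` on `X`: at each of the
`ω₁` innings player I chooses an open cover and player II picks one of its members;
player II wins if the union of the chosen sets is dense in `X`. -/
def PlayerIIWinsG1OD (X : Type*) [TopologicalSpace X] : Prop :=
  ∃ F : (ξ : Ordinal.{0}) → ξ < (Cardinal.aleph 1).ord →
      ((η : Ordinal.{0}) → η ≤ ξ → Set (Set X)) → Set X,
    (∀ (ξ : Ordinal.{0}) (hξ : ξ < (Cardinal.aleph 1).ord)
      (h : (η : Ordinal.{0}) → η ≤ ξ → Set (Set X)),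
      (∀ η hη, IsOpenCover (h η hη)) → F ξ hξ h ∈ h ξ le_rfl) ∧
    (∀ U : Ordinal.{0} → Set (Set X),
      (∀ ξ < (Cardinal.aleph 1).ord, IsOpenCover (U ξ)) →
      Dense (⋃₀ {V | ∃ ξ, ∃ hξ : ξ < (Cardinal.aleph 1).ord, V = F ξ hξ fun η _ => U η}))

/-- If `X` is first countable and player II has a winning strategy in `G((V_x)_{x∈X})`
for every open neighborhood assignment `(V_x)_{x∈X}`, then player II has a winning
strategy in `G₁^{ω₁}(𝒪,𝒟)`. -/
theorem stmt12 {X : Type*} [TopologicalSpace X] [FirstCountableTopology X]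
    (h : ∀ V : X → Set X, IsONA V → PlayerIIWinsONAGame V) :
    PlayerIIWinsG1OD X := by
  classical
  set ω₁ : Ordinal.{0} := (Cardinal.aleph 1).ord with hω₁
  -- a countable open neighborhood basis at each point
  have hbx : ∀ x : X, ∃ b : ℕ → Set X,
      (∀ n, IsOpen (b n) ∧ x ∈ b n) ∧
      ∀ U : Set X, IsOpen U → x ∈ U → ∃ n, b n ⊆ U := by
    intro x
    obtain ⟨b, hb⟩ := (nhds x).exists_antitone_basis
    refine ⟨fun n => interior (b n), fun n =>
      ⟨isOpen_interior, mem_interior_iff_mem_nhds.2 (hb.mem n)⟩, fun U hU hxU => ?_⟩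
    obtain ⟨n, -, hn⟩ := hb.toHasBasis.mem_iff.mp (hU.mem_nhds hxU)
    exact ⟨n, interior_subset.trans hn⟩
  choose b hb1 hb2 using hbx
  -- the neighborhood assignments
  have hONA : ∀ n : ℕ, IsONA (fun x => b x n) := fun n x => hb1 x n
  choose F hF1 hF2 using fun n : ℕ => h (fun x => b x n) (hONA n)
  -- encoding: ξ = ω * ζ + n
  have enc_lt : ∀ {ζ : Ordinal.{0}}, ζ < ω₁ → ∀ {m : Ordinal.{0}}, m < Ordinal.omega0 →
      Ordinal.omega0 * ζ + m < ω₁ := by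
    intro ζ hζ m hm
    rw [hω₁, Cardinal.lt_ord] at *
    rw [Ordinal.card_add, Ordinal.card_mul, Ordinal.card_omega0]
    refine Cardinal.add_lt_of_lt Cardinal.aleph0_lt_aleph_one.le
      (Cardinal.mul_lt_of_lt Cardinal.aleph0_lt_aleph_one.le
        Cardinal.aleph0_lt_aleph_one hζ) ?_
    calc m.card ≤ Ordinal.omega0.card := Ordinal.card_le_card hm.le
    _ = Cardinal.aleph0 := Ordinal.card_omega0
    _ < Cardinal.aleph 1 := Cardinal.aleph0_lt_aleph_one
  have hdiv : ∀ {ξ : Ordinal.{0}}, ξ < ω₁ → ξ / Ordinal.omega0 < ω₁ := fun {ξ} hξ =>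
    lt_of_le_of_lt (Ordinal.div_le_of_le_mul (Ordinal.le_mul_right ξ Ordinal.omega0_pos)) hξ
  have enc_le : ∀ (ξ η : Ordinal.{0}), η ≤ ξ / Ordinal.omega0 →
      Ordinal.omega0 * η + ξ % Ordinal.omega0 ≤ ξ := by
    intro ξ η hη
    calc Ordinal.omega0 * η + ξ % Ordinal.omega0
        ≤ Ordinal.omega0 * (ξ / Ordinal.omega0) + ξ % Ordinal.omega0 :=
          add_le_add_left (mul_le_mul_right hη _) _
      _ = ξ := Ordinal.div_add_mod ξ _
  -- decode the natural number part
  set f : Ordinal.{0} → ℕ := fun o => (Ordinal.card o).toNat with hf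
  -- the strategy
  refine ⟨fun ξ hξ hist => F (f (ξ % Ordinal.omega0)) (ξ / Ordinal.omega0) (hdiv hξ)
    (fun η hη => hist (Ordinal.omega0 * η + ξ % Ordinal.omega0) (enc_le ξ η hη)), ?_, ?_⟩
  · -- validity
    intro ξ hξ hist hcov
    have key : ∀ (o : Ordinal.{0}) (ho : o ≤ ξ) (_ : o = ξ), hist o ho = hist ξ le_rfl := by
      rintro o ho rfl; rfl
    have hmem : F (f (ξ % Ordinal.omega0)) (ξ / Ordinal.omega0) (hdiv hξ)
        (fun η hη => hist (Ordinal.omega0 * η + ξ % Ordinal.omega0) (enc_le ξ η hη))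
        ∈ hist (Ordinal.omega0 * (ξ / Ordinal.omega0) + ξ % Ordinal.omega0)
            (enc_le ξ _ le_rfl) :=
      hF1 _ _ _ _ (fun η hη => hcov _ _)
    rw [key _ _ (Ordinal.div_add_mod ξ _)] at hmem
    exact hmem
  · -- winning condition
    have Fcg : ∀ (k : ℕ) (ζ' ζ : Ordinal.{0}) (e : ζ' = ζ) (hζ' : ζ' < ω₁) (hζ : ζ < ω₁)
        (g : (η : Ordinal.{0}) → η ≤ ζ → Set (Set X))
        (g' : (η : Ordinal.{0}) → η ≤ ζ' → Set (Set X)),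
        (∀ η (hη : η ≤ ζ'), g' η hη = g η (e ▸ hη)) → F k ζ' hζ' g' = F k ζ hζ g := by
      rintro k ζ' ζ rfl hζ' hζ g g' hg
      have hgg : g' = g := funext fun η => funext fun hη => hg η hη
      rw [hgg]
    intro U hU
    rw [dense_iff_inter_open]
    rintro O hO ⟨x, hxO⟩
    obtain ⟨n, hn⟩ := hb2 x O hO hxO
    have hUn : ∀ ξ < ω₁, IsOpenCover (U (Ordinal.omega0 * ξ + (n : Ordinal.{0}))) :=
      fun ξ hξ => hU _ (enc_lt hξ (Ordinal.nat_lt_omega0 n))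
    obtain ⟨ζ, hζ, y, hy1, hy2⟩ := hF2 n (fun η => U (Ordinal.omega0 * η + n)) hUn x
    have hξ : Ordinal.omega0 * ζ + (n : Ordinal.{0}) < ω₁ :=
      enc_lt hζ (Ordinal.nat_lt_omega0 n)
    have e1 : (Ordinal.omega0 * ζ + (n : Ordinal.{0})) % Ordinal.omega0 = (n : Ordinal.{0}) := by
      rw [Ordinal.mul_add_mod_self, Ordinal.mod_eq_of_lt (Ordinal.nat_lt_omega0 n)]
    have e2 : (Ordinal.omega0 * ζ + (n : Ordinal.{0})) / Ordinal.omega0 = ζ := by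
      rw [Ordinal.mul_add_div _ Ordinal.omega0_ne_zero,
        Ordinal.div_eq_zero_of_lt (Ordinal.nat_lt_omega0 n), add_zero]
    refine ⟨y, hn hy1, _, ⟨Ordinal.omega0 * ζ + (n : Ordinal.{0}), hξ, rfl⟩, ?_⟩
    show y ∈ F (f ((Ordinal.omega0 * ζ + (n : Ordinal.{0})) % Ordinal.omega0))
      ((Ordinal.omega0 * ζ + (n : Ordinal.{0})) / Ordinal.omega0) (hdiv hξ)
      (fun η _ => U (Ordinal.omega0 * η + (Ordinal.omega0 * ζ + (n : Ordinal.{0})) % Ordinal.omega0))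
    rw [show f ((Ordinal.omega0 * ζ + (n : Ordinal.{0})) % Ordinal.omega0) = n from by
      rw [hf, e1]; simp]
    rw [Fcg n _ ζ e2 (hdiv hξ) hζ (fun η _ => U (Ordinal.omega0 * η + (n : Ordinal.{0})))
      (fun η _ => U (Ordinal.omega0 * η + (Ordinal.omega0 * ζ + (n : Ordinal.{0})) % Ordinal.omega0))
      (fun η hη => by rw [e1])]
    exact hy2
end
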